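/- arXiv:1301.5841 — 11 statements merged into one kernel-verified Lean document; each statement's English description precedes it below -/
import Mathlib

section
/- Every pseudo-injective module is automorphism-invariant: if M is a module such that for every submodule A of M each monomorphism A → M extends to an endomorphism of M, then M is invariant under all automorphisms of its injective hull. -/
universe u v w

section Defs

variable {R : Type u} [Ring R]

/-- `N` is an essential submodule of `M`. -/
def EssentialSub {M : Type v} [AddCommGroup M] [Module R M] (N : Submodule R M) : Prop :=
  ∀ K : Submodule R M, K ⊓ N = ⊥ → K = ⊥

/-- `N` is essential in `P` (both submodules of `M`, `N ≤ P`). -/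
def EssentialIn {M : Type v} [AddCommGroup M] [Module R M] (N P : Submodule R M) : Prop :=
  N ≤ P ∧ ∀ K : Submodule R M, K ≤ P → K ⊓ N = ⊥ → K = ⊥

/-- `N` is a closed submodule of `M`: it has no proper essential extension in `M`. -/
def ClosedSub {M : Type v} [AddCommGroup M] [Module R M] (N : Submodule R M) : Prop :=
  ∀ P : Submodule R M, EssentialIn N P → N = P

/-- `i : M →ₗ[R] E` realizes `E` as an injective hull of `M`. -/
structure IsInjectiveHull {M : Type v} {E : Type w} [AddCommGroup M] [Module R M]
    [AddCommGroup E] [Module R E] (i : M →ₗ[R] E) : Prop where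
  inj : Function.Injective i
  injE : Module.Injective R E
  ess : EssentialSub (LinearMap.range i)

/-- `M` is invariant under every automorphism of the hull `E` given by `i`. -/
def HullAutInv {M : Type v} {E : Type w} [AddCommGroup M] [Module R M]
    [AddCommGroup E] [Module R E] (i : M →ₗ[R] E) : Prop :=
  ∀ g : E ≃ₗ[R] E, ∀ m : M, g (i m) ∈ LinearMap.range i

end Defs

/-- `M` is automorphism-invariant: invariant under all automorphisms of its injective hull. -/
def AutInvariant (R : Type u) [Ring R] (M : Type v) [AddCommGroup M] [Module R M] : Prop :=
  ∀ (E : Type v) [AddCommGroup E] [Module R E] (i : M →ₗ[R] E),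
    IsInjectiveHull i → HullAutInv i

/-- Every monomorphism from a submodule of `M` into `M` extends to an endomorphism of `M`. -/
def PseudoInjective (R : Type u) [Ring R] (M : Type v) [AddCommGroup M] [Module R M] : Prop :=
  ∀ (A : Submodule R M) (f : A →ₗ[R] M), Function.Injective f →
    ∃ g : M →ₗ[R] M, ∀ a : A, g a = f a

/-- Every homomorphism from a submodule of `M` into `M` extends to an endomorphism of `M`. -/
def QuasiInjective (R : Type u) [Ring R] (M : Type v) [AddCommGroup M] [Module R M] : Prop :=
  ∀ (A : Submodule R M) (f : A →ₗ[R] M), ∃ g : M →ₗ[R] M, ∀ a : A, g a = f a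

/-- `X` is `Y`-injective. -/
def RelInjective (R : Type u) [Ring R] (X : Type v) (Y : Type w) [AddCommGroup X] [Module R X]
    [AddCommGroup Y] [Module R Y] : Prop :=
  ∀ (A : Submodule R Y) (f : A →ₗ[R] X), ∃ g : Y →ₗ[R] X, ∀ a : A, g a = f a

/-- `M` contains no direct sum of two nonzero isomorphic submodules. -/
def SquareFreeMod (R : Type u) [Ring R] (M : Type v) [AddCommGroup M] [Module R M] : Prop :=
  ∀ (A B : Submodule R M), A ⊓ B = ⊥ → Nonempty (A ≃ₗ[R] B) → A = ⊥

/-- `X` and `Y` have no nonzero isomorphic submodules. -/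
def OrthogonalMod (R : Type u) [Ring R] (X : Type v) (Y : Type w) [AddCommGroup X] [Module R X]
    [AddCommGroup Y] [Module R Y] : Prop :=
  ∀ (A : Submodule R X) (B : Submodule R Y), Nonempty (A ≃ₗ[R] B) → A = ⊥

/-- No nonzero element of `M` is annihilated by an essential (right) ideal of `R`. -/
def NonsingularMod (R : Type u) [Ring R] (M : Type v) [AddCommGroup M] [Module R M] : Prop :=
  ∀ m : M, EssentialSub (LinearMap.ker (LinearMap.toSpanSingleton R M m)) → m = 0

/-- every pseudo-injective module is automorphism-invariant. -/
theorem pseudoInjective_implies_autInvariant {R : Type u} [Ring R]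
    {M : Type v} {E : Type w} [AddCommGroup M] [Module R M] [AddCommGroup E] [Module R E]
    (i : M →ₗ[R] E) (hhull : IsInjectiveHull i)
    (hp : PseudoInjective R M) :
    HullAutInv i := by
  intro σ m
  classical
  set e : M ≃ₗ[R] LinearMap.range i := LinearEquiv.ofInjective i hhull.inj with he
  have hex : ∀ x : M, ((e x : LinearMap.range i) : E) = i x := by
    intro x; exact LinearEquiv.ofInjective_apply i x
  have hie : ∀ y : LinearMap.range i, i (e.symm y) = (y : E) := by
    intro y
    rw [← hex (e.symm y)]
    exact congrArg Subtype.val (e.apply_symm_apply y)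
  -- The submodule A = {x ∈ M | σ (i x) ∈ range i}
  set A : Submodule R M :=
    Submodule.comap i (Submodule.comap (σ : E →ₗ[R] E) (LinearMap.range i)) with hA
  have hmemA : ∀ x : M, x ∈ A ↔ σ (i x) ∈ LinearMap.range i := by
    intro x; simp [hA]
  -- φ0 : A → E, a ↦ σ (i a), lands in range i
  set φ0 : A →ₗ[R] E := (σ : E →ₗ[R] E) ∘ₗ i ∘ₗ A.subtype with hφ0
  have hφ0mem : ∀ a : A, φ0 a ∈ LinearMap.range i := by
    intro a
    exact (hmemA a.1).1 a.2
  set φ : A →ₗ[R] M :=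
    e.symm.toLinearMap ∘ₗ (φ0.codRestrict (LinearMap.range i) hφ0mem) with hφ
  have hiφ : ∀ a : A, i (φ a) = σ (i (a : M)) := by
    intro a
    have : i (φ a) = ((φ0.codRestrict (LinearMap.range i) hφ0mem a : LinearMap.range i) : E) :=
      hie _
    simpa [hφ0] using this
  have hφinj : Function.Injective φ := by
    intro a b hab
    have h1 : i (φ a) = i (φ b) := congrArg i hab
    rw [hiφ, hiφ] at h1
    have h2 : i (a : M) = i (b : M) := σ.injective h1
    exact Subtype.ext (hhull.inj h2)
  obtain ⟨f, hf⟩ := hp A φ hφinj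
  -- extend i ∘ f ∘ e.symm : range i → E along the inclusion range i ↪ E
  set g0 : (LinearMap.range i) →ₗ[R] E := i ∘ₗ f ∘ₗ e.symm.toLinearMap with hg0
  obtain ⟨g, hg⟩ := hhull.injE.out (LinearMap.range i).subtype
    Subtype.val_injective g0
  have hgM : ∀ x : M, g (i x) = i (f x) := by
    intro x
    have h1 : g ((LinearMap.range i).subtype (e x)) = g0 (e x) := hg (e x)
    have h2 : (LinearMap.range i).subtype (e x) = i x := hex x
    rw [h2] at h1
    rw [h1]
    simp [hg0]
  -- key: σ and g agree on range i
  have hagree : ∀ x : M, σ (i x) = g (i x) := by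
    set K : Submodule R E :=
      LinearMap.range (((σ : E →ₗ[R] E) - g) ∘ₗ i) with hK
    have hKbot : K = ⊥ := by
      apply hhull.ess
      rw [Submodule.eq_bot_iff]
      rintro y ⟨hyK, hyM⟩
      obtain ⟨x, hx⟩ := hyK
      obtain ⟨m', hm'⟩ := hyM
      have hx' : σ (i x) - g (i x) = y := by
        simpa using hx
      have hxA : x ∈ A := by
        rw [hmemA]
        have hy : y = σ (i x) - g (i x) := hx'.symm
        have : σ (i x) = i m' + g (i x) := by
          rw [hm', hy]; abel
        rw [this, hgM x]
        exact ⟨m' + f x, by simp⟩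
      have : σ (i x) = i (f x) := by
        have h1 : i (φ ⟨x, hxA⟩) = σ (i x) := hiφ ⟨x, hxA⟩
        have h2 : f x = φ ⟨x, hxA⟩ := hf ⟨x, hxA⟩
        rw [← h2] at h1
        exact h1.symm
      rw [← hx', this, hgM x, sub_self]
    intro x
    have : σ (i x) - g (i x) ∈ K := ⟨x, by simp⟩
    rw [hKbot, Submodule.mem_bot, sub_eq_zero] at this
    exact this
  rw [hagree m, hgM m]
  exact ⟨f m, rfl⟩
end

section
/- A module M is automorphism-invariant if and only if every isomorphism between two essential submodules of M extends to an automorphism of M. -/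
universe u v w

section AuxEss

variable {R : Type u} [Ring R] {M : Type v} {E : Type w}
  [AddCommGroup M] [Module R M] [AddCommGroup E] [Module R E]

lemma essentialSub_iff_forall {S : Submodule R M} :
    EssentialSub S ↔ ∀ x : M, x ≠ 0 → ∃ r : R, r • x ∈ S ∧ r • x ≠ 0 := by
  constructor
  · intro h x hx
    by_contra hc
    push_neg at hc
    have hspan : Submodule.span R {x} ⊓ S = ⊥ := by
      rw [eq_bot_iff]
      rintro y ⟨hy1, hy2⟩
      obtain ⟨r, rfl⟩ := Submodule.mem_span_singleton.mp hy1
      simpa using hc r hy2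
    have hb := h _ hspan
    have hxs : x ∈ Submodule.span R ({x} : Set M) := Submodule.mem_span_singleton_self x
    rw [hb, Submodule.mem_bot] at hxs
    exact hx hxs
  · intro h K hK
    rw [eq_bot_iff]
    intro x hx
    by_contra hx0
    obtain ⟨r, hrS, hr0⟩ := h x hx0
    have : r • x ∈ K ⊓ S := ⟨K.smul_mem r hx, hrS⟩
    rw [hK] at this
    exact hr0 this

lemma essentialSub_map (i : M →ₗ[R] E) (hi : Function.Injective i)
    (hr : EssentialSub (LinearMap.range i)) {B : Submodule R M} (hB : EssentialSub B) :
    EssentialSub (B.map i) := by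
  rw [essentialSub_iff_forall] at hB hr ⊢
  intro x hx
  obtain ⟨r, hrm, hr0⟩ := hr x hx
  obtain ⟨m, hm⟩ := hrm
  have hm0 : m ≠ 0 := by rintro rfl; simp at hm; exact hr0 hm.symm
  obtain ⟨s, hsB, hs0⟩ := hB m hm0
  refine ⟨s * r, ?_, ?_⟩
  · rw [mul_smul, ← hm, ← map_smul]
    exact Submodule.mem_map_of_mem hsB
  · rw [mul_smul, ← hm, ← map_smul]
    intro h
    exact hs0 (hi (by simpa using h))

lemma essentialSub_comap (i : M →ₗ[R] E) (hi : Function.Injective i)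
    {S : Submodule R E} (hS : EssentialSub S) : EssentialSub (S.comap i) := by
  rw [essentialSub_iff_forall] at hS ⊢
  intro x hx
  have hix : i x ≠ 0 := fun h => hx (hi (by simpa using h))
  obtain ⟨r, hrS, hr0⟩ := hS (i x) hix
  exact ⟨r, by simpa [Submodule.mem_comap] using hrS,
    fun h => hr0 (by rw [← map_smul] at hrS ⊢; simp [h])⟩

lemma essentialSub_top : EssentialSub (⊤ : Submodule R M) := by
  intro K hK
  simpa using hK

lemma essentialSub_equiv_map (g : E ≃ₗ[R] E) {S : Submodule R E} (hS : EssentialSub S) :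
    EssentialSub (S.map (g : E →ₗ[R] E)) := by
  refine essentialSub_map (g : E →ₗ[R] E) g.injective ?_ hS
  have : LinearMap.range (g : E →ₗ[R] E) = ⊤ := LinearMap.range_eq_top.mpr g.surjective
  rw [this]; exact essentialSub_top

lemma exists_lift' {X : Type*} [AddCommGroup X] [Module R X] (i : M →ₗ[R] E)
    (hinj : Function.Injective i) (φ : X →ₗ[R] E)
    (h : ∀ x : X, φ x ∈ LinearMap.range i) :
    ∃ l : X →ₗ[R] M, ∀ x, i (l x) = φ x := by
  refine ⟨((LinearEquiv.ofInjective i hinj).symm : ↥(LinearMap.range i) →ₗ[R] M) ∘ₗ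
    LinearMap.codRestrict (LinearMap.range i) φ h, fun x => ?_⟩
  have key : ∀ y : LinearMap.range i, i ((LinearEquiv.ofInjective i hinj).symm y) = (y : E) := by
    intro y
    conv_rhs => rw [← (LinearEquiv.ofInjective i hinj).apply_symm_apply y]
    exact (LinearEquiv.ofInjective_apply i _).symm
  simpa using key ⟨φ x, h x⟩

end AuxEss

/-- `M` is automorphism-invariant iff every isomorphism between two essential
submodules of `M` extends to an automorphism of `M`. -/
theorem autInvariant_iff_essential_iso_extends {R : Type u} [Ring R]
    {M : Type v} {E : Type w} [AddCommGroup M] [Module R M] [AddCommGroup E] [Module R E]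
    (i : M →ₗ[R] E) (hhull : IsInjectiveHull i) :
    HullAutInv i ↔
      ∀ (A B : Submodule R M), EssentialSub A → EssentialSub B →
        ∀ f : ↥A ≃ₗ[R] ↥B, ∃ g : M ≃ₗ[R] M, ∀ a : A, g ↑a = ↑(f a) := by
  classical
  obtain ⟨hinj, hinjE, hess⟩ := hhull
  constructor
  · -- automorphism-invariance implies essential isomorphisms extend
    intro hAut A B hA hB f
    obtain ⟨φ, hφ0⟩ := hinjE.out (A.map i).subtype (Submodule.injective_subtype _)
      (((i.comp B.subtype).comp (f : ↥A →ₗ[R] ↥B)).comp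
        ((Submodule.equivMapOfInjective i hinj A).symm : ↥(A.map i) →ₗ[R] ↥A))
    have hφa : ∀ a : ↥A, φ (i a) = i (f a) := by
      intro a
      have h1 := hφ0 (Submodule.equivMapOfInjective i hinj A a)
      have h2 : ((A.map i).subtype (Submodule.equivMapOfInjective i hinj A a)) = i a :=
        Submodule.coe_equivMapOfInjective_apply i hinj A a
      rw [h2] at h1
      simpa using h1
    have hφinj : Function.Injective φ := by
      apply LinearMap.ker_eq_bot.mp
      apply essentialSub_map i hinj hess hA
      rw [eq_bot_iff]
      rintro x ⟨hxk, hxm⟩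
      obtain ⟨a, ha, rfl⟩ := hxm
      have h0 : φ (i a) = 0 := hxk
      rw [hφa ⟨a, ha⟩] at h0
      have h1 : (f ⟨a, ha⟩ : M) = 0 := hinj (by simpa using h0)
      have h2 : (⟨a, ha⟩ : ↥A) = 0 := f.injective (by
        apply Subtype.ext
        simpa using h1)
      have h3 : a = 0 := by simpa using congrArg (fun x : ↥A => (x : M)) h2
      simp [h3]
    obtain ⟨ρ, hρ⟩ := hinjE.out φ hφinj LinearMap.id
    have hρinj : Function.Injective ρ := by
      apply LinearMap.ker_eq_bot.mp
      apply essentialSub_map i hinj hess hB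
      rw [eq_bot_iff]
      rintro x ⟨hxk, hxm⟩
      obtain ⟨b, hb, rfl⟩ := hxm
      obtain ⟨a, ha⟩ := f.surjective ⟨b, hb⟩
      have h1 : i b = φ (i a) := by
        rw [hφa a, ha]
      have h2 : ρ (i b) = 0 := hxk
      rw [h1, hρ] at h2
      have h3 : (a : M) = 0 := hinj (by simpa using h2)
      simp [Submodule.mem_bot, h1, h3]
    have hφsurj : Function.Surjective φ := by
      intro x
      refine ⟨ρ x, hρinj ?_⟩
      rw [hρ]
      rfl
    let Φ : E ≃ₗ[R] E := LinearEquiv.ofBijective φ ⟨hφinj, hφsurj⟩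
    obtain ⟨l1, hl1⟩ := exists_lift' i hinj ((Φ : E →ₗ[R] E) ∘ₗ i) (fun m => hAut Φ m)
    obtain ⟨l2, hl2⟩ := exists_lift' i hinj ((Φ.symm : E →ₗ[R] E) ∘ₗ i) (fun m => hAut Φ.symm m)
    have h12 : ∀ m, l2 (l1 m) = m := by
      intro m
      apply hinj
      rw [hl2]
      simp only [LinearMap.comp_apply]
      rw [hl1]
      simp
    have h21 : ∀ m, l1 (l2 m) = m := by
      intro m
      apply hinj
      rw [hl1]
      simp only [LinearMap.comp_apply]
      rw [hl2]
      simp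
    refine ⟨LinearEquiv.ofLinear l1 l2 (by ext m; simpa using h21 m)
      (by ext m; simpa using h12 m), ?_⟩
    intro a
    apply hinj
    have : (LinearEquiv.ofLinear l1 l2 (by ext m; simpa using h21 m)
        (by ext m; simpa using h12 m) : M ≃ₗ[R] M) (a : M) = l1 (a : M) := rfl
    rw [this, hl1]
    exact hφa a
  · -- essential isomorphisms extend implies automorphism-invariance
    intro H g m
    set A : Submodule R M := (((LinearMap.range i).comap (g : E →ₗ[R] E)).comap i) with hA
    have hAmem : ∀ x : M, x ∈ A ↔ g (i x) ∈ LinearMap.range i := by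
      intro x; rw [hA]; simp [Submodule.mem_comap]
    have hAess : EssentialSub A := by
      apply essentialSub_comap i hinj
      have heq : (LinearMap.range i).comap (g : E →ₗ[R] E)
          = (LinearMap.range i).map (g.symm : E →ₗ[R] E) := by
        rw [Submodule.map_equiv_eq_comap_symm]
        simp
      rw [heq]
      exact essentialSub_equiv_map g.symm hess
    set B : Submodule R M := (((A.map i).map (g : E →ₗ[R] E)).comap i) with hB
    have hBmem : ∀ x : M, x ∈ B ↔ i x ∈ (A.map i).map (g : E →ₗ[R] E) := by
      intro x; rw [hB]; simp [Submodule.mem_comap]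
    have hBess : EssentialSub B :=
      essentialSub_comap i hinj (essentialSub_equiv_map g (essentialSub_map i hinj hess hAess))
    obtain ⟨fl, hfl⟩ := exists_lift' i hinj (((g : E →ₗ[R] E) ∘ₗ i) ∘ₗ A.subtype)
      (fun a => by simpa using (hAmem a).mp a.2)
    obtain ⟨fl', hfl'⟩ := exists_lift' i hinj (((g.symm : E →ₗ[R] E) ∘ₗ i) ∘ₗ B.subtype)
      (fun b => by
        obtain ⟨x, hx, hgx⟩ := (hBmem b).mp b.2
        have : (g.symm : E →ₗ[R] E) (i b) = x := by
          apply g.injective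
          simpa using hgx.symm
        simp only [LinearMap.comp_apply, Submodule.coe_subtype]
        rw [this]
        obtain ⟨a, _, rfl⟩ := hx
        exact ⟨a, rfl⟩)
    have hflv : ∀ a : ↥A, i (fl a) = g (i a) := fun a => by simpa using hfl a
    have hfl'v : ∀ b : ↥B, i (fl' b) = g.symm (i b) := fun b => by simpa using hfl' b
    have hflB : ∀ a : ↥A, fl a ∈ B := by
      intro a
      rw [hBmem]
      rw [hflv a]
      exact Submodule.mem_map_of_mem (Submodule.mem_map_of_mem a.2)
    have hfl'A : ∀ b : ↥B, fl' b ∈ A := by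
      intro b
      rw [hAmem]
      rw [hfl'v b]
      simpa using ⟨b, rfl⟩
    have hinv1 : ∀ a : ↥A, fl' ⟨fl a, hflB a⟩ = (a : M) := by
      intro a
      apply hinj
      rw [hfl'v ⟨fl a, hflB a⟩]
      simp only [hflv a]
      simp
    have hinv2 : ∀ b : ↥B, fl ⟨fl' b, hfl'A b⟩ = (b : M) := by
      intro b
      apply hinj
      rw [hflv ⟨fl' b, hfl'A b⟩]
      simp only [hfl'v b]
      simp
    let flB : ↥A →ₗ[R] ↥B := LinearMap.codRestrict B fl hflB
    let fl'A : ↥B →ₗ[R] ↥A := LinearMap.codRestrict A fl' hfl'A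
    have hc1 : flB ∘ₗ fl'A = LinearMap.id := by
      ext b
      exact hinv2 b
    have hc2 : fl'A ∘ₗ flB = LinearMap.id := by
      ext a
      exact hinv1 a
    let fAB : ↥A ≃ₗ[R] ↥B := LinearEquiv.ofLinear flB fl'A hc1 hc2
    obtain ⟨G, hG⟩ := H A B hAess hBess fAB
    have hGa : ∀ x : M, x ∈ A → i (G x) = g (i x) := by
      intro x hx
      have h1 := hG ⟨x, hx⟩
      have hcoe : ((fAB (⟨x, hx⟩ : ↥A) : ↥B) : M) = fl ⟨x, hx⟩ := rfl
      rw [hcoe] at h1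
      rw [show G x = G ((⟨x, hx⟩ : ↥A) : M) from rfl, h1]
      exact hflv ⟨x, hx⟩
    set k : M →ₗ[R] E := (g : E →ₗ[R] E) ∘ₗ i - i ∘ₗ (G : M →ₗ[R] M) with hk
    have hkA : ∀ x : M, x ∈ A → k x = 0 := by
      intro x hx
      rw [hk]
      simp only [LinearMap.sub_apply, LinearMap.comp_apply, LinearEquiv.coe_coe]
      rw [← hGa x hx]
      simp
    have hkg : ∀ x : M, g (i x) = k x + i (G x) := by
      intro x
      rw [hk]
      simp
    by_cases hkm : k m = 0
    · refine ⟨G m, ?_⟩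
      rw [hkg m, hkm]
      simp
    · exfalso
      have hspan : Submodule.span R ({k m} : Set E) ⊓ LinearMap.range i ≠ ⊥ := by
        intro hbot
        have h0 := hess _ hbot
        have : k m ∈ Submodule.span R ({k m} : Set E) := Submodule.mem_span_singleton_self _
        rw [h0, Submodule.mem_bot] at this
        exact hkm this
      obtain ⟨x, hx, hx0⟩ := Submodule.ne_bot_iff _ |>.mp hspan
      obtain ⟨hxs, hxr⟩ := hx
      obtain ⟨r, rfl⟩ := Submodule.mem_span_singleton.mp hxs
      have hrm : (r • m) ∈ A := by
        rw [hAmem]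
        have : g (i (r • m)) = r • k m + i (G (r • m)) := by
          rw [hkg (r • m)]
          simp
        rw [this]
        exact Submodule.add_mem _ hxr ⟨G (r • m), rfl⟩
      have hz : k (r • m) = 0 := hkA _ hrm
      rw [map_smul] at hz
      exact hx0 hz
end

section
/- If M is an automorphism-invariant module whose injective hull decomposes as E(M) = E₁ ⊕ E₂ ⊕ E₃ with E₁ ≅ E₂, then M = (M ∩ E₁) ⊕ (M ∩ E₂) ⊕ (M ∩ E₃). -/
universe u v w

section Aux
variable {R : Type u} [Ring R] {E : Type v} [AddCommGroup E] [Module R E]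

/-- unipotent automorphism `id + f` when `f ∘ f = 0`. -/
def unipotentAux (f : E →ₗ[R] E) (hf : ∀ x, f (f x) = 0) : E ≃ₗ[R] E :=
  LinearEquiv.ofLinear (LinearMap.id + f) (LinearMap.id - f)
    (by ext x; simp [map_sub, hf x])
    (by ext x; simp [map_sub, hf x])

theorem unipotentAux_apply (f : E →ₗ[R] E) (hf : ∀ x, f (f x) = 0) (x : E) :
    unipotentAux f hf x = x + f x := rfl
end Aux

/-- if `M` is automorphism-invariant with `E(M) = E₁ ⊕ E₂ ⊕ E₃`, `E₁ ≅ E₂`,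
then `M = (M ∩ E₁) ⊕ (M ∩ E₂) ⊕ (M ∩ E₃)`. -/
theorem autInvariant_decomposition_of_hull {R : Type u} [Ring R]
    {E : Type v} [AddCommGroup E] [Module R E]
    (hE : Module.Injective R E) (M : Submodule R E) (hess : EssentialSub M)
    (hinv : ∀ g : E ≃ₗ[R] E, ∀ m ∈ M, g m ∈ M)
    (E₁ E₂ E₃ : Submodule R E)
    (h1 : Module.Injective R ↥E₁) (h2 : Module.Injective R ↥E₂) (h3 : Module.Injective R ↥E₃)
    (hsup : E₁ ⊔ E₂ ⊔ E₃ = ⊤)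
    (hind1 : E₁ ⊓ (E₂ ⊔ E₃) = ⊥) (hind2 : E₂ ⊓ (E₁ ⊔ E₃) = ⊥) (hind3 : E₃ ⊓ (E₁ ⊔ E₂) = ⊥)
    (hiso : Nonempty (↥E₁ ≃ₗ[R] ↥E₂)) :
    M = M ⊓ E₁ ⊔ M ⊓ E₂ ⊔ M ⊓ E₃ := by
  obtain ⟨φ⟩ := hiso
  have hc1 : IsCompl E₁ (E₂ ⊔ E₃) :=
    ⟨disjoint_iff.2 hind1, codisjoint_iff.2 (by rw [← sup_assoc]; exact hsup)⟩
  have hc2 : IsCompl E₂ (E₁ ⊔ E₃) :=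
    ⟨disjoint_iff.2 hind2, codisjoint_iff.2 (by rw [← sup_assoc, sup_comm E₂ E₁]; exact hsup)⟩
  set π₁ := E₁.linearProjOfIsCompl (E₂ ⊔ E₃) hc1 with hπ₁def
  set π₂ := E₂.linearProjOfIsCompl (E₁ ⊔ E₃) hc2 with hπ₂def
  set f : E →ₗ[R] E := E₂.subtype ∘ₗ (φ : ↥E₁ →ₗ[R] ↥E₂) ∘ₗ π₁ with hfdef
  set f' : E →ₗ[R] E := E₁.subtype ∘ₗ (φ.symm : ↥E₂ →ₗ[R] ↥E₁) ∘ₗ π₂ with hf'def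
  have hfapp : ∀ x : E, f x = ↑(φ (π₁ x)) := fun x => rfl
  have hf'app : ∀ x : E, f' x = ↑(φ.symm (π₂ x)) := fun x => rfl
  have hπ1E₂ : ∀ (y : ↥E₂), π₁ (y : E) = 0 := fun y =>
    Submodule.projectionOnto_apply_of_mem_right hc1 (Submodule.mem_sup_left y.2)
  have hπ2E₁ : ∀ (y : ↥E₁), π₂ (y : E) = 0 := fun y =>
    Submodule.projectionOnto_apply_of_mem_right hc2 (Submodule.mem_sup_left y.2)
  have hf2 : ∀ x, f (f x) = 0 := by
    intro x
    rw [hfapp, hfapp, hπ1E₂]; simp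
  have hf'2 : ∀ x, f' (f' x) = 0 := by
    intro x
    rw [hf'app, hf'app, hπ2E₁]; simp
  set g : E ≃ₗ[R] E := unipotentAux f hf2 with hgdef
  set g' : E ≃ₗ[R] E := unipotentAux f' hf'2 with hg'def
  refine le_antisymm ?_ (sup_le (sup_le inf_le_left inf_le_left) inf_le_left)
  intro m hm
  have hmT : m ∈ E₁ ⊔ E₂ ⊔ E₃ := hsup.symm ▸ Submodule.mem_top
  obtain ⟨y, hy, c, hc, hyc⟩ := Submodule.mem_sup.1 hmT
  obtain ⟨a, ha, b, hb, hab⟩ := Submodule.mem_sup.1 hy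
  have hm1 : m = a + (b + c) := by rw [← hyc, ← hab, add_assoc]
  have hm2 : m = b + (a + c) := by
    rw [← hyc, ← hab]; abel
  have hπ1m : π₁ m = ⟨a, ha⟩ := by
    rw [hm1, map_add]
    have h1 : π₁ ((⟨a, ha⟩ : ↥E₁) : E) = ⟨a, ha⟩ :=
      Submodule.linearProjOfIsCompl_apply_left hc1 _
    have h2 : π₁ (b + c) = 0 :=
      Submodule.projectionOnto_apply_of_mem_right hc1
        (Submodule.add_mem _ (Submodule.mem_sup_left hb) (Submodule.mem_sup_right hc))
    rw [h2, add_zero]; exact h1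
  have hπ2m : π₂ m = ⟨b, hb⟩ := by
    rw [hm2, map_add]
    have h1 : π₂ ((⟨b, hb⟩ : ↥E₂) : E) = ⟨b, hb⟩ :=
      Submodule.linearProjOfIsCompl_apply_left hc2 _
    have h2 : π₂ (a + c) = 0 :=
      Submodule.projectionOnto_apply_of_mem_right hc2
        (Submodule.add_mem _ (Submodule.mem_sup_left ha) (Submodule.mem_sup_right hc))
    rw [h2, add_zero]; exact h1
  -- step 1 : φ(a) ∈ M
  have hfa : (↑(φ ⟨a, ha⟩) : E) ∈ M := by
    have h := M.sub_mem (hinv g m hm) hm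
    rwa [hgdef, unipotentAux_apply, add_sub_cancel_left, hfapp, hπ1m] at h
  -- step 2 : a ∈ M
  have haM : a ∈ M := by
    have h := M.sub_mem (hinv g' _ hfa) hfa
    rw [hg'def, unipotentAux_apply, add_sub_cancel_left, hf'app] at h
    have : π₂ (↑(φ ⟨a, ha⟩) : E) = φ ⟨a, ha⟩ :=
      Submodule.linearProjOfIsCompl_apply_left hc2 _
    rwa [this, LinearEquiv.symm_apply_apply] at h
  -- step 3 : φ.symm(b) ∈ M
  have hfb : (↑(φ.symm ⟨b, hb⟩) : E) ∈ M := by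
    have h := M.sub_mem (hinv g' m hm) hm
    rwa [hg'def, unipotentAux_apply, add_sub_cancel_left, hf'app, hπ2m] at h
  -- step 4 : b ∈ M
  have hbM : b ∈ M := by
    have h := M.sub_mem (hinv g _ hfb) hfb
    rw [hgdef, unipotentAux_apply, add_sub_cancel_left, hfapp] at h
    have : π₁ (↑(φ.symm ⟨b, hb⟩) : E) = φ.symm ⟨b, hb⟩ :=
      Submodule.linearProjOfIsCompl_apply_left hc1 _
    rwa [this, LinearEquiv.apply_symm_apply] at h
  -- step 5 : c ∈ M
  have hcM : c ∈ M := by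
    have : c = m - a - b := by rw [hm1]; abel
    rw [this]
    exact M.sub_mem (M.sub_mem hm haM) hbM
  have : m = a + b + c := by rw [hm1]; abel
  rw [this]
  exact Submodule.add_mem _
    (Submodule.add_mem _
      (Submodule.mem_sup_left (Submodule.mem_sup_left (Submodule.mem_inf.2 ⟨haM, ha⟩)))
      (Submodule.mem_sup_left (Submodule.mem_sup_right (Submodule.mem_inf.2 ⟨hbM, hb⟩))))
    (Submodule.mem_sup_right (Submodule.mem_inf.2 ⟨hcM, hc⟩))
end

section
/- If M is an automorphism-invariant module and A, B are closed submodules of M with A ∩ B = 0, then A is B-injective and B is A-injective. -/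
universe u v w

section Aux

variable {R : Type u} [Ring R] {E : Type w} [AddCommGroup E] [Module R E]


lemma essIn_trans {N P Q : Submodule R E} (h1 : EssentialIn N P) (h2 : EssentialIn P Q) :
    EssentialIn N Q := by
  refine ⟨h1.1.trans h2.1, fun K hKQ hKN => ?_⟩
  refine h2.2 K hKQ ?_
  refine h1.2 (K ⊓ P) inf_le_right (le_bot_iff.mp ?_)
  calc K ⊓ P ⊓ N ≤ K ⊓ N := by
        rw [inf_assoc]
        exact inf_le_inf_left K inf_le_right
    _ = ⊥ := hKN

lemma exists_maximal_essential (N : Submodule R E) :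
    ∃ Em : Submodule R E, EssentialIn N Em ∧ ∀ P, EssentialIn N P → Em ≤ P → P = Em := by
  have hub : ∀ c ⊆ {P : Submodule R E | EssentialIn N P}, IsChain (· ≤ ·) c → ∀ y ∈ c,
      ∃ ub ∈ {P : Submodule R E | EssentialIn N P}, ∀ z ∈ c, z ≤ ub := by
    intro c hcs hchain y hy
    refine ⟨sSup c, ⟨(hcs hy).1.trans (le_sSup hy), fun K hK hKN => ?_⟩, fun z hz => le_sSup hz⟩
    rw [eq_bot_iff]
    intro x hx
    obtain ⟨P, hPc, hxP⟩ := (Submodule.mem_sSup_of_directed ⟨y, hy⟩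
      hchain.directedOn).mp (hK hx)
    have hKP : K ⊓ P = ⊥ := (hcs hPc).2 (K ⊓ P) inf_le_right (le_bot_iff.mp (by
      calc K ⊓ P ⊓ N ≤ K ⊓ N := inf_le_inf_right N inf_le_left
        _ = ⊥ := hKN))
    have : x ∈ K ⊓ P := ⟨hx, hxP⟩
    rw [hKP] at this
    exact this
  obtain ⟨m, _, hmem, hmax⟩ := zorn_le_nonempty₀ {P : Submodule R E | EssentialIn N P} hub N
    ⟨le_rfl, fun K hK h => by rwa [inf_eq_left.mpr hK] at h⟩
  exact ⟨m, hmem, fun P hP hle => le_antisymm (hmax hP hle) hle⟩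

lemma exists_maximal_complement (T N : Submodule R E) (h : T ⊓ N = ⊥) :
    ∃ C : Submodule R E, T ≤ C ∧ C ⊓ N = ⊥ ∧
      ∀ D, T ≤ D → D ⊓ N = ⊥ → C ≤ D → D = C := by
  have hub : ∀ c ⊆ {C : Submodule R E | C ⊓ N = ⊥}, IsChain (· ≤ ·) c → ∀ y ∈ c,
      ∃ ub ∈ {C : Submodule R E | C ⊓ N = ⊥}, ∀ z ∈ c, z ≤ ub := by
    intro c hcs hchain y hy
    refine ⟨sSup c, ?_, fun z hz => le_sSup hz⟩
    rw [Set.mem_setOf_eq, eq_bot_iff]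
    rintro x ⟨hx1, hx2⟩
    obtain ⟨P, hPc, hxP⟩ := (Submodule.mem_sSup_of_directed ⟨y, hy⟩
      hchain.directedOn).mp hx1
    have : x ∈ P ⊓ N := ⟨hxP, hx2⟩
    rw [hcs hPc] at this
    exact this
  obtain ⟨m, hTm, hmem, hmax⟩ := zorn_le_nonempty₀ {C : Submodule R E | C ⊓ N = ⊥} hub T h
  exact ⟨m, hTm, hmem, fun D hTD hDN hle => le_antisymm (hmax hDN hle) hle⟩

lemma rel_inj_of_closed {R : Type u} [Ring R] {M : Type v} {E : Type w}
    [AddCommGroup M] [Module R M] [AddCommGroup E] [Module R E]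
    (i : M →ₗ[R] E) (hhull : IsInjectiveHull i) (hinv : HullAutInv i)
    (A B : Submodule R M) (hB : ClosedSub B) (hAB : A ⊓ B = ⊥) :
    RelInjective R ↥B ↥A := by
  intro X f
  have hi := hhull.inj
  set iA := A.map i with hiAdef
  set iB := B.map i with hiBdef
  obtain ⟨EB, hEBess, hEBmax⟩ := exists_maximal_essential iB
  have hABmap : iA ⊓ iB = ⊥ := by
    rw [hiAdef, hiBdef, ← Submodule.map_inf i hi, hAB, Submodule.map_bot]
  have hiAEB : iA ⊓ EB = ⊥ := by
    refine hEBess.2 (iA ⊓ EB) inf_le_right (le_bot_iff.mp ?_)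
    calc iA ⊓ EB ⊓ iB ≤ iA ⊓ iB := by
          refine inf_le_inf ?_ le_rfl
          exact inf_le_left
      _ = ⊥ := hABmap
  obtain ⟨C, hAC, hCEB, hCmax⟩ := exists_maximal_complement iA EB hiAEB
  set S := EB ⊔ C with hSdef
  set EB' : Submodule R ↥S := EB.comap S.subtype with hEB'def
  set C' : Submodule R ↥S := C.comap S.subtype with hC'def
  have hcompl : IsCompl EB' C' := by
    constructor
    · rw [disjoint_iff, eq_bot_iff]
      rintro x ⟨hx1, hx2⟩
      have hx : (x : E) ∈ C ⊓ EB := ⟨hx2, hx1⟩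
      rw [hCEB] at hx
      exact Subtype.ext hx
    · rw [codisjoint_iff, eq_top_iff]
      rintro ⟨x, hx⟩ -
      obtain ⟨b, hb, c, hc, hbc⟩ := Submodule.mem_sup.mp hx
      refine Submodule.mem_sup.mpr ⟨⟨b, Submodule.mem_sup_left hb⟩, hb, ⟨c, Submodule.mem_sup_right hc⟩, hc, ?_⟩
      exact Subtype.ext hbc
  set p₀ := Submodule.linearProjOfIsCompl EB' C' hcompl with hp₀def
  set p₁ : ↥S →ₗ[R] E := S.subtype.comp (EB'.subtype.comp p₀) with hp₁def
  obtain ⟨p, hp⟩ := hhull.injE.out S.subtype S.injective_subtype p₁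
  have hpEB : ∀ x ∈ EB, p x = x := by
    intro x hx
    have hxS : x ∈ S := Submodule.mem_sup_left hx
    have h1 := hp ⟨x, hxS⟩
    have h2 : p₀ ⟨x, hxS⟩ = ⟨⟨x, hxS⟩, hx⟩ :=
      Submodule.linearProjOfIsCompl_apply_left hcompl ⟨⟨x, hxS⟩, hx⟩
    simpa [hp₁def, h2] using h1
  have hpC : ∀ x ∈ C, p x = 0 := by
    intro x hx
    have hxS : x ∈ S := Submodule.mem_sup_right hx
    have h1 := hp ⟨x, hxS⟩
    have h2 : p₀ ⟨x, hxS⟩ = 0 :=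
      Submodule.projectionOnto_apply_of_mem_right hcompl (x := ⟨x, hxS⟩) hx
    simpa [hp₁def, h2] using h1
  have hkerC : C ≤ LinearMap.ker p := fun x hx => LinearMap.mem_ker.mpr (hpC x hx)
  have hkerEB : LinearMap.ker p ⊓ EB = ⊥ := by
    rw [eq_bot_iff]
    rintro x ⟨hx1, hx2⟩
    have : p x = x := hpEB x hx2
    rw [LinearMap.mem_ker.mp hx1] at this
    simpa using this.symm
  have hker : LinearMap.ker p = C := hCmax _ (hAC.trans hkerC) hkerEB hkerC
  have hEBrange : EB ≤ LinearMap.range p := fun x hx => ⟨x, hpEB x hx⟩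
  have hessr : EssentialIn EB (LinearMap.range p) := by
    refine ⟨hEBrange, fun K hK hKEB => ?_⟩
    have hK₁EB : K.comap p ⊓ EB = ⊥ := by
      rw [eq_bot_iff]
      rintro x ⟨hx1, hx2⟩
      have hpx : p x = x := hpEB x hx2
      have : x ∈ K ⊓ EB := ⟨by rw [← hpx]; exact hx1, hx2⟩
      rwa [hKEB] at this
    have hCK₁ : C ≤ K.comap p := fun c hc => by
      simp only [Submodule.mem_comap, hpC c hc]
      exact zero_mem K
    have hK₁ : K.comap p = C := hCmax _ (hAC.trans hCK₁) hK₁EB hCK₁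
    rw [eq_bot_iff]
    intro k hk
    obtain ⟨e, he⟩ := hK hk
    have heK : e ∈ K.comap p := by rw [Submodule.mem_comap, he]; exact hk
    rw [hK₁, ← hker, LinearMap.mem_ker] at heK
    rw [← he, heK]
    exact zero_mem ⊥
  have hrangeEB : LinearMap.range p = EB :=
    hEBmax _ (essIn_trans hEBess hessr) hEBrange
  have hpmem : ∀ y, p y ∈ EB := fun y => hrangeEB ▸ LinearMap.mem_range_self p y
  -- extend f to a map on E
  set ιA : ↥A →ₗ[R] E := i.comp A.subtype with hιAdef
  have hιinj : Function.Injective ιA := hi.comp A.injective_subtype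
  set T := X.map ιA with hTdef
  set eqv := Submodule.equivMapOfInjective ιA hιinj X with heqvdef
  set jmap : ↥T →ₗ[R] E := (i.comp (B.subtype.comp f)).comp eqv.symm.toLinearMap with hjdef
  obtain ⟨hm, hhm⟩ := hhull.injE.out T.subtype T.injective_subtype jmap
  have hhmX : ∀ x : ↥X, hm (ιA ↑x) = i ↑(f x) := by
    intro x
    have hcoe : (eqv x : E) = ιA ↑x :=
      Submodule.coe_equivMapOfInjective_apply ιA hιinj X x
    have h1 := hhm (eqv x)
    simp only [hjdef, LinearMap.comp_apply, LinearEquiv.coe_toLinearMap,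
      LinearEquiv.symm_apply_apply, Submodule.coe_subtype] at h1
    rw [← hcoe]
    exact h1
  set π : E →ₗ[R] E := LinearMap.id - p with hπdef
  set θ : E →ₗ[R] E := p.comp (hm.comp π) with hθdef
  have hθapp : ∀ y, θ y = p (hm (y - p y)) := fun y => rfl
  have hθEB : ∀ y, θ y ∈ EB := fun y => hpmem _
  have hθθ : ∀ y, θ (θ y) = 0 := by
    intro y
    rw [hθapp (θ y), hpEB _ (hθEB y), sub_self, map_zero, map_zero]
  have hθX : ∀ x : ↥X, θ (ιA ↑x) = i ↑(f x) := by
    intro x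
    have hmemC : ιA ↑x ∈ C := hAC ⟨A.subtype ↑x, (X.subtype x).2, rfl⟩
    rw [hθapp, hpC _ hmemC, sub_zero, hhmX x, hpEB _ (hEBess.1 ⟨↑(f x), (f x).2, rfl⟩)]
  set g : E ≃ₗ[R] E := LinearEquiv.ofLinear (LinearMap.id + θ) (LinearMap.id - θ)
    (by
      ext y
      simp only [LinearMap.comp_apply, LinearMap.add_apply, LinearMap.sub_apply,
        LinearMap.id_apply, map_sub, hθθ, LinearMap.id_coe, id_eq]
      abel)
    (by
      ext y
      simp only [LinearMap.comp_apply, LinearMap.add_apply, LinearMap.sub_apply,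
        LinearMap.id_apply, map_add, hθθ, LinearMap.id_coe, id_eq]
      abel) with hgdef
  have hgapp : ∀ y, g y = y + θ y := fun y => rfl
  have hBeq : B = EB.comap i := by
    refine hB _ ⟨fun b hb => Submodule.mem_comap.mpr (hEBess.1 ⟨b, hb, rfl⟩), ?_⟩
    intro K hK hKB
    have h1 : K.map i ≤ EB := Submodule.map_le_iff_le_comap.mpr hK
    have h2 : K.map i ⊓ iB = ⊥ := by
      rw [hiBdef, ← Submodule.map_inf i hi, hKB, Submodule.map_bot]
    have h3 : K.map i = ⊥ := hEBess.2 _ h1 h2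
    rw [eq_bot_iff]
    intro x hx
    have : i x ∈ K.map i := Submodule.mem_map_of_mem hx
    rw [h3, Submodule.mem_bot] at this
    have : x = 0 := hi (by rw [this, map_zero])
    simp [this]
  have hθA : ∀ a : ↥A, θ (i ↑a) ∈ iB := by
    intro a
    obtain ⟨m', hm'⟩ := hinv g ↑a
    have hmem : θ (i ↑a) ∈ LinearMap.range i := by
      refine ⟨m' - ↑a, ?_⟩
      rw [map_sub, hm', hgapp]
      abel
    obtain ⟨n, hn⟩ := hmem
    have hnB : n ∈ B := by
      rw [hBeq, Submodule.mem_comap, hn]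
      exact hθEB (i ↑a)
    exact ⟨n, hnB, hn⟩
  set ψ : ↥A →ₗ[R] E := θ.comp (i.comp A.subtype) with hψdef
  have hψmem : ∀ a : ↥A, ψ a ∈ iB := fun a => hθA a
  set ψ' : ↥A →ₗ[R] ↥iB := LinearMap.codRestrict iB ψ hψmem with hψ'def
  set eqvB := Submodule.equivMapOfInjective i hi B with heqvBdef
  refine ⟨eqvB.symm.toLinearMap.comp ψ', fun x => ?_⟩
  have hgoal : (ψ' ↑x : E) = ↑(eqvB (f x)) := by
    have h1 : (ψ' ↑x : E) = θ (i ↑(↑x : ↥A)) := rfl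
    have h2 : (eqvB (f x) : E) = i ↑(f x) :=
      Submodule.coe_equivMapOfInjective_apply i hi B (f x)
    rw [h1, h2, ← hθX x]
    rfl
  have : ψ' ↑x = eqvB (f x) := Subtype.ext hgoal
  simp only [LinearMap.comp_apply, LinearEquiv.coe_toLinearMap, this,
    LinearEquiv.symm_apply_apply]

end Aux

/-- closed submodules of an automorphism-invariant module with zero
intersection are relatively injective. -/
theorem closed_submodules_relatively_injective {R : Type u} [Ring R]
    {M : Type v} {E : Type w} [AddCommGroup M] [Module R M] [AddCommGroup E] [Module R E]
    (i : M →ₗ[R] E) (hhull : IsInjectiveHull i) (hinv : HullAutInv i)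
    (A B : Submodule R M) (hA : ClosedSub A) (hB : ClosedSub B) (hAB : A ⊓ B = ⊥) :
    RelInjective R ↥A ↥B ∧ RelInjective R ↥B ↥A := by
  exact ⟨rel_inj_of_closed i hhull hinv B A hA (by rwa [inf_comm]),
    rel_inj_of_closed i hhull hinv A B hB hAB⟩
end

section
/- Let M be an automorphism-invariant module, K and T submodules of M that are complements of each other (each maximal with respect to trivial intersection with the other). Then every homomorphism f : E(K) → E(T) between their injective hulls satisfies f(K) ⊆ T; in particular T is K-injective. -/
universe u v w

/-- if `K` and `T` are complements of each other in the
automorphism-invariant module `M`, then every homomorphism `E(K) → E(T)` maps `K` into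
`T`; in particular `T` is `K`-injective. -/
theorem hom_of_hulls_of_complements {R : Type u} [Ring R]
    {E : Type v} [AddCommGroup E] [Module R E]
    (hE : Module.Injective R E) (M : Submodule R E) (hess : EssentialSub M)
    (hinv : ∀ g : E ≃ₗ[R] E, ∀ m ∈ M, g m ∈ M)
    (K T : Submodule R E) (hK : K ≤ M) (hT : T ≤ M) (hKT : K ⊓ T = ⊥)
    (hTmax : ∀ T' : Submodule R E, T' ≤ M → K ⊓ T' = ⊥ → T ≤ T' → T' = T)
    (hKmax : ∀ K' : Submodule R E, K' ≤ M → K' ⊓ T = ⊥ → K ≤ K' → K' = K)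
    (EK ET : Submodule R E) (hEK : Module.Injective R ↥EK) (hET : Module.Injective R ↥ET)
    (hdisj : EK ⊓ ET = ⊥) (hsup : EK ⊔ ET = ⊤)
    (hKess : EssentialIn K EK) (hTess : EssentialIn T ET) :
    (∀ f : ↥EK →ₗ[R] ↥ET, ∀ x : ↥EK, (x : E) ∈ K → ((f x : E) ∈ T)) ∧
      RelInjective R ↥T ↥K := by
  have hc : IsCompl EK ET := ⟨disjoint_iff.mpr hdisj, codisjoint_iff.mpr hsup⟩
  -- M ⊓ ET = T
  have hMET : M ⊓ ET = T := by
    apply hTmax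
    · exact inf_le_left
    · rw [eq_bot_iff]
      intro x hx
      have hxET : x ∈ EK ⊓ ET := ⟨hKess.1 hx.1, hx.2.2⟩
      rw [hdisj] at hxET; exact hxET
    · exact le_inf hT hTess.1
  have part1 : ∀ f : ↥EK →ₗ[R] ↥ET, ∀ x : ↥EK, (x : E) ∈ K → ((f x : E) ∈ T) := by
    intro f x hx
    set p : E →ₗ[R] ↥EK := EK.linearProjOfIsCompl ET hc with hp
    set N : E →ₗ[R] E := ET.subtype ∘ₗ f ∘ₗ p with hN
    have hNN : ∀ y : E, N (N y) = 0 := by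
      intro y
      have : p ((ET.subtype (f (p y)))) = 0 :=
        Submodule.linearProjOfIsCompl_apply_right hc (f (p y))
      simp only [hN, LinearMap.comp_apply, this, map_zero]
    have hgl : ((LinearMap.id + N) ∘ₗ (LinearMap.id - N) : E →ₗ[R] E) = LinearMap.id := by
      ext y
      simp only [LinearMap.comp_apply, LinearMap.sub_apply, LinearMap.add_apply,
        LinearMap.id_apply, map_sub, hNN]
      abel
    have hgr : ((LinearMap.id - N) ∘ₗ (LinearMap.id + N) : E →ₗ[R] E) = LinearMap.id := by
      ext y
      simp only [LinearMap.comp_apply, LinearMap.sub_apply, LinearMap.add_apply,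
        LinearMap.id_apply, map_add, hNN]
      abel
    set g : E ≃ₗ[R] E := LinearEquiv.ofLinear (LinearMap.id + N) (LinearMap.id - N) hgl hgr
    have hxM : (x : E) ∈ M := hK hx
    have hgx : g (x : E) ∈ M := hinv g _ hxM
    have hpx : p (x : E) = x := Submodule.linearProjOfIsCompl_apply_left hc x
    have hgx' : g (x : E) = (x : E) + (f x : E) := by
      simp only [g, LinearEquiv.ofLinear_apply, LinearMap.add_apply, LinearMap.id_apply,
        hN, LinearMap.comp_apply, hpx]
      rfl
    have hfxM : (f x : E) ∈ M := by
      have := M.sub_mem hgx hxM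
      rwa [hgx', add_sub_cancel_left] at this
    rw [← hMET]
    exact ⟨hfxM, (f x).2⟩
  refine ⟨part1, ?_⟩
  intro A f
  set j : ↥K →ₗ[R] ↥EK := Submodule.inclusion hKess.1 with hj
  set jT : ↥T →ₗ[R] ↥ET := Submodule.inclusion hTess.1 with hjT
  have hinj : Function.Injective (j ∘ₗ A.subtype) := by
    intro a b hab
    apply Subtype.ext; apply Subtype.ext
    exact congrArg (Subtype.val : ↥EK → E) hab
  obtain ⟨h, hh⟩ := hET.out (j ∘ₗ A.subtype) hinj (jT ∘ₗ f)
  refine ⟨{ toFun := fun x => ⟨(h (j x) : E), part1 h (j x) x.2⟩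
            map_add' := ?_, map_smul' := ?_ }, ?_⟩
  · intro a b; apply Subtype.ext
    simp only [map_add, Submodule.coe_add]
  · intro r a; apply Subtype.ext
    simp only [map_smul, RingHom.id_apply, Submodule.coe_smul]
  · intro a
    apply Subtype.ext
    show ((h (j (A.subtype a)) : ↥ET) : E) = ((f a : ↥T) : E)
    rw [show h (j (A.subtype a)) = (jT ∘ₗ f) a from hh a]
    rfl
end

section
/- If M is a nonsingular square-free module and D₁, D₂ are submodules of M with D₁ ∩ D₂ = 0, then Hom(D₁, D₂) = 0. -/
universe u v w

/-- in a nonsingular square-free module, submodules with zero intersection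
admit no nonzero homomorphisms between them. -/
theorem hom_eq_zero_of_disjoint {R : Type u} [Ring R]
    {M : Type v} [AddCommGroup M] [Module R M]
    (hns : NonsingularMod R M) (hsf : SquareFreeMod R M)
    (D₁ D₂ : Submodule R M) (h : D₁ ⊓ D₂ = ⊥) :
    ∀ f : ↥D₁ →ₗ[R] ↥D₂, f = 0 := by
  intro f
  -- Step 1: ker f is essential in D₁
  have hess : ∀ A' : Submodule R ↥D₁, A' ⊓ LinearMap.ker f = ⊥ → A' = ⊥ := by
    intro A' hA'
    set φ : ↥A' →ₗ[R] M := D₂.subtype ∘ₗ f ∘ₗ A'.subtype with hφdef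
    have hφ : Function.Injective φ := by
      rw [← LinearMap.ker_eq_bot]
      ext a
      simp only [LinearMap.mem_ker, Submodule.mem_bot, hφdef, LinearMap.comp_apply,
        Submodule.subtype_apply]
      constructor
      · intro ha
        have hkf : (a : ↥D₁) ∈ LinearMap.ker f := by
          simpa [LinearMap.mem_ker] using (Subtype.ext ha : f (a : ↥D₁) = 0)
        have : (a : ↥D₁) ∈ A' ⊓ LinearMap.ker f := ⟨a.2, hkf⟩
        rw [hA'] at this
        exact Subtype.ext (by simpa using this)
      · intro ha; simp [ha]
    have hinj : Function.Injective D₁.subtype := Submodule.injective_subtype D₁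
    set A : Submodule R M := A'.map D₁.subtype with hAdef
    set B : Submodule R M := LinearMap.range φ with hBdef
    have hAB : A ⊓ B = ⊥ := by
      rw [eq_bot_iff]
      intro x hx
      have hx1 : x ∈ D₁ := by
        rcases hx.1 with ⟨a, _, rfl⟩; exact a.2
      have hx2 : x ∈ D₂ := by
        rcases hx.2 with ⟨a, rfl⟩; exact (f (a : ↥D₁)).2
      have : x ∈ D₁ ⊓ D₂ := ⟨hx1, hx2⟩
      rw [h] at this; exact this
    have e1 : ↥A' ≃ₗ[R] ↥B := LinearEquiv.ofInjective φ hφ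
    have e2 : ↥A' ≃ₗ[R] ↥A := Submodule.equivMapOfInjective D₁.subtype hinj A'
    have hAbot : A = ⊥ := hsf A B hAB ⟨e2.symm.trans e1⟩
    have : A'.map D₁.subtype = (⊥ : Submodule R ↥D₁).map D₁.subtype := by
      simpa using hAbot
    exact Submodule.map_injective_of_injective hinj this
  -- Step 2: every value of f is zero
  ext x
  set ψ : R →ₗ[R] ↥D₁ := LinearMap.toSpanSingleton R ↥D₁ x with hψdef
  set I : Submodule R R := LinearMap.ker (f ∘ₗ ψ) with hIdef
  have hIess : ∀ J : Submodule R R, J ⊓ I = ⊥ → J = ⊥ := by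
    intro J hJ
    have hmap : J.map ψ = ⊥ := by
      apply hess
      rw [eq_bot_iff]
      intro y hy
      rcases hy.1 with ⟨r, hrJ, rfl⟩
      have hrI : r ∈ I := by
        simpa [hIdef, LinearMap.mem_ker] using hy.2
      have : r ∈ J ⊓ I := ⟨hrJ, hrI⟩
      rw [hJ] at this
      simp only [Submodule.mem_bot] at this
      simp [this]
    have hJI : J ≤ I := by
      intro r hr
      have : ψ r ∈ J.map ψ := ⟨r, hr, rfl⟩
      rw [hmap] at this
      simp only [Submodule.mem_bot] at this
      simp [hIdef, LinearMap.mem_ker, this]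
    rw [← hJ, inf_eq_left.mpr hJI]
  have hkerle : I ≤ LinearMap.ker (LinearMap.toSpanSingleton R M ((f x : M))) := by
    intro r hr
    have hfr : f (r • x) = 0 := by simpa [hIdef, hψdef, LinearMap.mem_ker] using hr
    have : r • f x = 0 := by rw [← map_smul, hfr]
    have : r • (f x : M) = 0 := by
      have := congrArg (Subtype.val) this
      simpa using this
    simpa [LinearMap.mem_ker] using this
  have : (f x : M) = 0 := by
    apply hns
    intro K hK
    apply hIess
    rw [eq_bot_iff]
    intro r hr
    have : r ∈ K ⊓ LinearMap.ker (LinearMap.toSpanSingleton R M ((f x : M))) :=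
      ⟨hr.1, hkerle hr.2⟩
    rw [hK] at this
    exact this
  simpa using Subtype.ext this
end

section
/- Every closed submodule of a nonsingular square-free module M is fully invariant in M, i.e., f(K) ⊆ K for every endomorphism f of M and every closed submodule K of M. -/
universe u v w

/-- every closed submodule of a nonsingular square-free module is fully
invariant. -/
theorem closed_fully_invariant {R : Type u} [Ring R]
    {M : Type v} [AddCommGroup M] [Module R M]
    (hns : NonsingularMod R M) (hsf : SquareFreeMod R M)
    (K : Submodule R M) (hK : ClosedSub K) (f : M →ₗ[R] M) :
    ∀ x ∈ K, f x ∈ K := by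
  set L : Submodule R M := K ⊓ Submodule.comap f K with hLdef
  -- Step A: any U ≤ K with U ⊓ L = ⊥ is ⊥.
  have stepA : ∀ U : Submodule R M, U ≤ K → U ⊓ L = ⊥ → U = ⊥ := by
    intro U hUK hUL
    have hmap : ∀ x ∈ U, f x ∈ U.map f := fun x hx => Submodule.mem_map_of_mem hx
    set g : U →ₗ[R] U.map f := f.restrict hmap with hg
    have hginj : Function.Injective g := by
      intro a b hab
      obtain ⟨x, hx⟩ := a
      obtain ⟨y, hy⟩ := b
      have hxy : f x = f y := congrArg Subtype.val hab
      have h1 : x - y ∈ U := U.sub_mem hx hy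
      have h2 : x - y ∈ L := by
        constructor
        · exact hUK h1
        · show f (x - y) ∈ K
          rw [map_sub, hxy, sub_self]
          exact K.zero_mem
      have : x - y ∈ U ⊓ L := ⟨h1, h2⟩
      rw [hUL, Submodule.mem_bot] at this
      exact Subtype.ext (sub_eq_zero.mp this)
    have hgsurj : Function.Surjective g := by
      rintro ⟨y, hy⟩
      obtain ⟨x, hx, rfl⟩ := hy
      exact ⟨⟨x, hx⟩, rfl⟩
    have hdisj : U ⊓ U.map f = ⊥ := by
      rw [eq_bot_iff]
      rintro x ⟨hxU, hxV⟩
      obtain ⟨y, hyU, rfl⟩ := hxV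
      have hyL : y ∈ L := ⟨hUK hyU, hUK hxU⟩
      have : y ∈ U ⊓ L := ⟨hyU, hyL⟩
      rw [hUL, Submodule.mem_bot] at this
      rw [this, map_zero]
      exact Submodule.zero_mem ⊥
    exact hsf U (U.map f) hdisj ⟨LinearEquiv.ofBijective g ⟨hginj, hgsurj⟩⟩
  -- Step B: K is essential in K ⊔ K.map f
  have stepB : EssentialIn K (K ⊔ K.map f) := by
    refine ⟨le_sup_left, ?_⟩
    intro U hUle hUK
    rw [eq_bot_iff]
    intro u hu
    rw [Submodule.mem_bot]
    apply hns u
    obtain ⟨k, hk, y, hy, hsum⟩ := Submodule.mem_sup.1 (hUle hu)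
    obtain ⟨k', hk', rfl⟩ := hy
    intro J hJ
    set t : R →ₗ[R] M := LinearMap.toSpanSingleton R M k' with ht
    set I' : Submodule R R := Submodule.comap t L with hI'
    -- J ⊓ I' = ⊥
    have hJI' : J ⊓ I' = ⊥ := by
      rw [eq_bot_iff]
      rintro r ⟨hrJ, hrI'⟩
      have hrk'L : r • k' ∈ L := hrI'
      have hru : r • u ∈ K := by
        rw [← hsum, smul_add]
        apply K.add_mem (K.smul_mem r hk)
        have : r • f k' = f (r • k') := (map_smul f r k').symm
        rw [this]
        exact hrk'L.2
      have hruU : r • u ∈ U := U.smul_mem r hu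
      have : r • u = 0 := by
        have h := (le_of_eq hUK) ⟨hruU, hru⟩
        rwa [Submodule.mem_bot] at h
      have hrker : r ∈ LinearMap.ker (LinearMap.toSpanSingleton R M u) := by
        rw [LinearMap.mem_ker, LinearMap.toSpanSingleton_apply]
        exact this
      have : r ∈ J ⊓ LinearMap.ker (LinearMap.toSpanSingleton R M u) := ⟨hrJ, hrker⟩
      rw [hJ, Submodule.mem_bot] at this
      rw [Submodule.mem_bot]
      exact this
    -- W = J.map t is ⊥ by step A
    have hWK : J.map t ≤ K := by
      rintro x ⟨r, hr, rfl⟩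
      exact K.smul_mem r hk'
    have hWL : (J.map t) ⊓ L = ⊥ := by
      rw [eq_bot_iff]
      rintro x ⟨hxW, hxL⟩
      obtain ⟨r, hrJ, rfl⟩ := hxW
      have : r ∈ J ⊓ I' := ⟨hrJ, hxL⟩
      rw [hJI', Submodule.mem_bot] at this
      rw [Submodule.mem_bot, this]
      simp [ht]
    have hW : J.map t = ⊥ := stepA (J.map t) hWK hWL
    -- conclude J = ⊥
    rw [eq_bot_iff]
    intro r hrJ
    have : t r ∈ J.map t := Submodule.mem_map_of_mem hrJ
    rw [hW, Submodule.mem_bot] at this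
    have hrI' : r ∈ I' := by
      show t r ∈ L
      rw [this]
      exact L.zero_mem
    have : r ∈ J ⊓ I' := ⟨hrJ, hrI'⟩
    rwa [hJI'] at this
  -- Step C
  intro x hx
  have hEq := hK (K ⊔ K.map f) stepB
  have hfx : f x ∈ K ⊔ K.map f := Submodule.mem_sup_right (Submodule.mem_map_of_mem hx)
  rwa [← hEq] at hfx
end

section
/- A simple ring R such that R_R is automorphism-invariant is right self-injective. -/
universe u v w

section Generic

variable {A : Type w} [Ring A]

lemma essIn_exists {M : Type v} [AddCommGroup M] [Module A M] {N P : Submodule A M}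
    (h : EssentialIn N P) {c : M} (hcP : c ∈ P) (hc : c ≠ 0) :
    ∃ a : A, a • c ∈ N ∧ a • c ≠ 0 := by
  have hsp : Submodule.span A {c} ≤ P := by
    rwa [Submodule.span_le, Set.singleton_subset_iff]
  have h1 : Submodule.span A {c} ⊓ N ≠ ⊥ := by
    intro hbot
    have hsp0 : Submodule.span A {c} = ⊥ := h.2 _ hsp hbot
    have : c ∈ (⊥ : Submodule A M) := hsp0 ▸ Submodule.mem_span_singleton_self c
    exact hc ((Submodule.mem_bot _).mp this)
  obtain ⟨y, ⟨hy1, hy2⟩, hy0⟩ := (Submodule.ne_bot_iff _).mp h1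
  obtain ⟨a, rfl⟩ := Submodule.mem_span_singleton.mp hy1
  exact ⟨a, hy2, hy0⟩

lemma essSub_essIn {M : Type v} [AddCommGroup M] [Module A M] {N : Submodule A M}
    (h : EssentialSub N) : EssentialIn N ⊤ :=
  ⟨le_top, fun K _ hK => h K hK⟩

lemma exists_max_compl {M : Type v} [AddCommGroup M] [Module A M] (N : Submodule A M) :
    ∃ K : Submodule A M, K ⊓ N = ⊥ ∧ ∀ K', K ≤ K' → K' ⊓ N = ⊥ → K' = K := by
  have hchain : ∀ c ⊆ {K : Submodule A M | K ⊓ N = ⊥}, IsChain (· ≤ ·) c → ∀ y ∈ c,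
      ∃ ub ∈ {K : Submodule A M | K ⊓ N = ⊥}, ∀ z ∈ c, z ≤ ub := by
    intro c hc hchain y hy
    refine ⟨sSup c, ?_, fun z hz => le_sSup hz⟩
    show sSup c ⊓ N = ⊥
    rw [Submodule.eq_bot_iff]
    rintro x ⟨hx1, hx2⟩
    obtain ⟨P, hPc, hxP⟩ := (Submodule.mem_sSup_of_directed ⟨y, hy⟩ hchain.directedOn).mp hx1
    have hmem : x ∈ P ⊓ N := ⟨hxP, hx2⟩
    rw [hc hPc] at hmem
    exact hmem
  obtain ⟨K, -, hmax⟩ := zorn_le_nonempty₀ {K : Submodule A M | K ⊓ N = ⊥} hchain ⊥ (by simp)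
  exact ⟨K, hmax.1, fun K' h1 h2 => le_antisymm (hmax.2 h2 h1) h1⟩

/-- A closed submodule of an injective module is the image of an idempotent endomorphism. -/
lemma closed_summand {E : Type v} [AddCommGroup E] [Module A E] (hE : Module.Injective A E)
    {N : Submodule A E} (hcl : ClosedSub N) :
    ∃ π : E →ₗ[A] E, (∀ x, π (π x) = π x) ∧ LinearMap.range π = N ∧ ∀ x ∈ N, π x = x := by
  obtain ⟨K, hKN, hKmax⟩ := exists_max_compl N
  set q : E →ₗ[A] E ⧸ K := K.mkQ with hqdef
  set A' : Submodule A (E ⧸ K) := N.map q with hA'def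
  let e0 : N →ₗ[A] A' :=
    LinearMap.codRestrict A' (q.domRestrict N) (fun x => Submodule.mem_map_of_mem x.2)
  have he0 : Function.Bijective e0 := by
    constructor
    · intro x y hxy
      have h1 : q x.1 = q y.1 := congrArg Subtype.val hxy
      have h2 : (x.1 - y.1 : E) ∈ K := (Submodule.Quotient.eq K).mp h1
      have h3 : (x.1 - y.1 : E) ∈ K ⊓ N := ⟨h2, N.sub_mem x.2 y.2⟩
      rw [hKN] at h3
      exact Subtype.ext (sub_eq_zero.mp h3)
    · rintro ⟨y, hy⟩
      obtain ⟨x, hxN, hx⟩ := hy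
      exact ⟨⟨x, hxN⟩, Subtype.ext hx⟩
  let e1 : N ≃ₗ[A] A' := LinearEquiv.ofBijective e0 he0
  let φ : A' →ₗ[A] E := N.subtype.comp e1.symm.toLinearMap
  obtain ⟨θ, hθ⟩ := hE.out A'.subtype (Submodule.injective_subtype A') φ
  have hθval : ∀ y : A', θ y.1 = ((e1.symm y : N) : E) := fun y => hθ y
  have hθN : ∀ x (hx : x ∈ N), θ (q x) = x := by
    intro x hx
    have h1 : (e0 ⟨x, hx⟩ : E ⧸ K) = q x := rfl
    have h2 := hθval (e0 ⟨x, hx⟩)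
    rw [h1] at h2
    rw [h2]
    have : e1.symm (e0 ⟨x, hx⟩) = ⟨x, hx⟩ := e1.symm_apply_apply ⟨x, hx⟩
    rw [this]
  have hθA : ∀ y (hy : y ∈ A'), θ y ∈ N := by
    intro y hy
    rw [hθval ⟨y, hy⟩]
    exact (e1.symm ⟨y, hy⟩).2
  -- A' is essential in E ⧸ K
  have hA'ess : ∀ L : Submodule A (E ⧸ K), L ⊓ A' = ⊥ → L = ⊥ := by
    intro L hL
    have hKle : K ≤ Submodule.comap q L := by
      intro x hx
      have : q x = 0 := (Submodule.Quotient.mk_eq_zero K).mpr hx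
      simp only [Submodule.mem_comap, this]
      exact L.zero_mem
    have hcompl : Submodule.comap q L ⊓ N = ⊥ := by
      rw [Submodule.eq_bot_iff]
      rintro x ⟨hx1, hx2⟩
      have h1 : q x ∈ L ⊓ A' := ⟨hx1, Submodule.mem_map_of_mem hx2⟩
      rw [hL] at h1
      have h2 : x ∈ K := by rwa [← Submodule.Quotient.mk_eq_zero K]
      have : x ∈ K ⊓ N := ⟨h2, hx2⟩
      rwa [hKN] at this
    have heq : Submodule.comap q L = K := hKmax _ hKle hcompl
    rw [Submodule.eq_bot_iff]
    intro y hy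
    obtain ⟨x, rfl⟩ := Submodule.mkQ_surjective K y
    have : x ∈ Submodule.comap q L := hy
    rw [heq] at this
    exact (Submodule.Quotient.mk_eq_zero K).mpr this
  have hθinj : Function.Injective θ := by
    rw [← LinearMap.ker_eq_bot]
    apply hA'ess
    rw [Submodule.eq_bot_iff]
    rintro y ⟨hy1, hy2⟩
    have h1 : θ y = 0 := hy1
    rw [hθval ⟨y, hy2⟩] at h1
    have h2 : e1.symm ⟨y, hy2⟩ = 0 := Subtype.ext h1
    have h3 : (⟨y, hy2⟩ : A') = 0 := by
      have := congrArg e1 h2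
      rwa [e1.apply_symm_apply, map_zero] at this
    exact congrArg Subtype.val h3
  have hNle : N ≤ LinearMap.range θ := fun x hx => ⟨q x, hθN x hx⟩
  have hNess : EssentialIn N (LinearMap.range θ) := by
    refine ⟨hNle, fun L hLle hLN => ?_⟩
    have hcomap : Submodule.comap θ L ⊓ A' = ⊥ := by
      rw [Submodule.eq_bot_iff]
      rintro y ⟨hy1, hy2⟩
      have h1 : θ y ∈ L ⊓ N := ⟨hy1, hθA y hy2⟩
      rw [hLN] at h1
      exact hθinj (by rw [(Submodule.mem_bot _).mp h1, map_zero])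
    have hbot := hA'ess _ hcomap
    rw [Submodule.eq_bot_iff]
    intro x hx
    obtain ⟨y, rfl⟩ := hLle hx
    have : y ∈ Submodule.comap θ L := hx
    rw [hbot] at this
    rw [(Submodule.mem_bot _).mp this, map_zero]
  have hNθ : N = LinearMap.range θ := hcl _ hNess
  refine ⟨θ.comp q, ?_, ?_, ?_⟩
  · intro x
    have hmem : θ (q x) ∈ N := hNθ ▸ ⟨q x, rfl⟩
    exact hθN _ hmem
  · apply le_antisymm
    · rintro y ⟨x, rfl⟩
      exact hNθ ▸ ⟨q x, rfl⟩
    · intro x hx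
      exact ⟨x, hθN x hx⟩
  · exact hθN

end Generic
section HullExist

variable {A : Type w} [Ring A]

lemma exists_hull {M E0 : Type v} [AddCommGroup M] [Module A M]
    [AddCommGroup E0] [Module A E0] (hE0 : Module.Injective A E0) (j : M →ₗ[A] E0)
    (hj : Function.Injective j) :
    ∃ (C' : Submodule A E0) (i : M →ₗ[A] C'), IsInjectiveHull i := by
  set s : Set (Submodule A E0) := {P | EssentialIn (LinearMap.range j) P} with hs
  have hbase : LinearMap.range j ∈ s := by
    refine ⟨le_rfl, fun K hK hKN => ?_⟩
    rwa [inf_eq_left.mpr hK] at hKN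
  have hchain : ∀ c ⊆ s, IsChain (· ≤ ·) c → ∀ y ∈ c, ∃ ub ∈ s, ∀ z ∈ c, z ≤ ub := by
    intro c hc hchain y hy
    refine ⟨sSup c, ⟨(hc hy).1.trans (le_sSup hy), fun K hKle hKj => ?_⟩, fun z hz => le_sSup hz⟩
    rw [Submodule.eq_bot_iff]
    intro x hx
    obtain ⟨P, hPc, hxP⟩ :=
      (Submodule.mem_sSup_of_directed ⟨y, hy⟩ hchain.directedOn).mp (hKle hx)
    have hsple : Submodule.span A {x} ≤ P := by
      rwa [Submodule.span_le, Set.singleton_subset_iff]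
    have hspK : Submodule.span A {x} ≤ K := by
      rw [Submodule.span_le, Set.singleton_subset_iff]; exact hx
    have hsub : Submodule.span A {x} ⊓ LinearMap.range j = ⊥ := by
      rw [eq_bot_iff, ← hKj]
      exact inf_le_inf_right _ hspK
    have := (hc hPc).2 _ hsple hsub
    have hxmem : x ∈ (⊥ : Submodule A E0) := this ▸ Submodule.mem_span_singleton_self x
    exact (Submodule.mem_bot _).mp hxmem
  obtain ⟨C', -, hmax⟩ := zorn_le_nonempty₀ s hchain _ hbase
  have hC's : EssentialIn (LinearMap.range j) C' := hmax.1
  have hclosed : ClosedSub C' := by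
    intro P hP
    have hPs : P ∈ s := by
      refine ⟨hC's.1.trans hP.1, fun K hKP hKj => ?_⟩
      have h1 : (K ⊓ C') ⊓ LinearMap.range j = ⊥ := by
        rw [eq_bot_iff, ← hKj]
        exact inf_le_inf_right _ inf_le_left
      have h2 : K ⊓ C' = ⊥ := hC's.2 _ inf_le_right h1
      exact hP.2 K hKP h2
    exact le_antisymm hP.1 (hmax.2 hPs hP.1)
  have hjC : ∀ m, j m ∈ C' := fun m => hC's.1 ⟨m, rfl⟩
  set i : M →ₗ[A] C' := j.codRestrict C' hjC with hi
  have hij : ∀ m, (i m : E0) = j m := fun m => rfl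
  obtain ⟨π, hπ1, hπ2, hπ3⟩ := closed_summand hE0 hclosed
  refine ⟨C', i, ?_, ?_, ?_⟩
  · -- injective
    intro a b hab
    exact hj (congrArg Subtype.val hab)
  · -- Module.Injective
    refine ⟨fun X Y _ _ _ _ f hf g => ?_⟩
    obtain ⟨Ψ, hΨ⟩ := hE0.out f hf (C'.subtype.comp g)
    refine ⟨LinearMap.codRestrict C' (π.comp Ψ) (fun y => hπ2 ▸ ⟨Ψ y, rfl⟩), fun x => ?_⟩
    apply Subtype.ext
    show π (Ψ (f x)) = ((g x : C') : E0)
    rw [hΨ]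
    exact hπ3 _ (g x).2
  · -- essential
    intro K hK
    have hKmap : Submodule.map C'.subtype K ⊓ LinearMap.range j = ⊥ := by
      rw [Submodule.eq_bot_iff]
      rintro x ⟨⟨k, hkK, rfl⟩, ⟨m, hm⟩⟩
      have hkim : k = i m := Subtype.ext hm.symm
      have : k ∈ K ⊓ LinearMap.range i := ⟨hkK, ⟨m, hkim.symm⟩⟩
      rw [hK] at this
      rw [(Submodule.mem_bot _).mp this]
      rfl
    have hbot := hC's.2 _ (Submodule.map_subtype_le C' K) hKmap
    rw [Submodule.eq_bot_iff]
    intro k hkK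
    have : (k : E0) ∈ Submodule.map C'.subtype K := ⟨k, hkK, rfl⟩
    rw [hbot] at this
    exact Subtype.ext ((Submodule.mem_bot _).mp this)

end HullExist
section Specific

open MulOpposite

variable {R : Type u} [Ring R]

/-- In a simple ring, the right singular ideal is zero. -/
lemma sing_zero (hsimple : IsSimpleRing R) (v : R)
    (hv : ∀ r : R, r ≠ 0 → ∃ s : R, r * s ≠ 0 ∧ v * (r * s) = 0) : v = 0 := by
  by_contra hv0
  haveI := hsimple
  set Z : Set R := {w | ∀ r : R, r ≠ 0 → ∃ s : R, r * s ≠ 0 ∧ w * (r * s) = 0} with hZ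
  have zero_mem : (0 : R) ∈ Z := fun r hr => ⟨1, by simpa using hr, by simp⟩
  have add_mem : ∀ {x y : R}, x ∈ Z → y ∈ Z → x + y ∈ Z := by
    intro x y hx hy r hr
    obtain ⟨s1, hs1, hxs1⟩ := hx r hr
    obtain ⟨s2, hs2, hys2⟩ := hy (r * s1) hs1
    refine ⟨s1 * s2, by rwa [← mul_assoc], ?_⟩
    have hassoc : r * (s1 * s2) = r * s1 * s2 := (mul_assoc r s1 s2).symm
    rw [add_mul, hassoc, hys2, ← mul_assoc, ← mul_assoc, mul_assoc x r s1, hxs1, zero_mul,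
      zero_add]
  have neg_mem : ∀ {x : R}, x ∈ Z → -x ∈ Z := by
    intro x hx r hr
    obtain ⟨s, hs, hxs⟩ := hx r hr
    exact ⟨s, hs, by rw [neg_mul, hxs, neg_zero]⟩
  have mul_left_mem : ∀ {x y : R}, y ∈ Z → x * y ∈ Z := by
    intro x y hy r hr
    obtain ⟨s, hs, hys⟩ := hy r hr
    exact ⟨s, hs, by rw [mul_assoc, hys, mul_zero]⟩
  have mul_right_mem : ∀ {x y : R}, x ∈ Z → x * y ∈ Z := by
    intro x y hx r hr
    by_cases hyr : y * r = 0
    · exact ⟨1, by simpa using hr, by rw [mul_one, mul_assoc, hyr, mul_zero]⟩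
    · obtain ⟨s, hs, hxs⟩ := hx (y * r) hyr
      refine ⟨s, ?_, ?_⟩
      · intro h0
        apply hs
        rw [mul_assoc, h0, mul_zero]
      · rw [mul_assoc x y, ← mul_assoc y r s, hxs]
  set J : TwoSidedIdeal R := TwoSidedIdeal.mk' Z zero_mem add_mem neg_mem mul_left_mem
    mul_right_mem with hJ
  have hmem : ∀ x : R, x ∈ J ↔ x ∈ Z := fun x =>
    TwoSidedIdeal.mem_mk' Z zero_mem add_mem neg_mem mul_left_mem mul_right_mem x
  have hvJ : v ∈ J := (hmem v).mpr hv
  have h1 : (1 : R) ∈ J := IsSimpleRing.one_mem_of_ne_zero_mem J hv0 hvJ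
  obtain ⟨s, hs, h1s⟩ := ((hmem 1).mp h1) 1 (by
    intro h10
    apply hv0
    calc v = v * 1 := (mul_one v).symm
    _ = v * 0 := by rw [h10]
    _ = 0 := mul_zero v)
  rw [one_mul] at h1s
  exact hs h1s

end Specific
section HullCtx

open MulOpposite

variable {R : Type u} [Ring R] {C : Type u} [AddCommGroup C] [Module Rᵐᵒᵖ C]

lemma hi_op (i : R →ₗ[Rᵐᵒᵖ] C) (m : R) : i m = (op m : Rᵐᵒᵖ) • i 1 := by
  rw [← map_smul]
  congr 1
  rw [op_smul_eq_mul, one_mul]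

/-- Left multiplication as an `Rᵐᵒᵖ`-linear endomorphism of `R`. -/
def lmulOp (a : R) : R →ₗ[Rᵐᵒᵖ] R where
  toFun x := a * x
  map_add' := mul_add a
  map_smul' s x := by
    show a * (s • x) = s • (a * x)
    rw [MulOpposite.smul_eq_mul_unop, MulOpposite.smul_eq_mul_unop, mul_assoc]

variable {i : R →ₗ[Rᵐᵒᵖ] C}

lemma hull_ess_exists (hull : IsInjectiveHull i) {c : C} (hc : c ≠ 0) :
    ∃ a : Rᵐᵒᵖ, a • c ∈ LinearMap.range i ∧ a • c ≠ 0 :=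
  essIn_exists (essSub_essIn hull.ess) Submodule.mem_top hc

lemma hull_kills (hsimple : IsSimpleRing R) (hull : IsInjectiveHull i)
    {F : Module.End Rᵐᵒᵖ C} {N P : Submodule Rᵐᵒᵖ C}
    (hNP : EssentialIn N P) (hFN : ∀ y ∈ N, F y = 0) {x : C} (hx : x ∈ P) : F x = 0 := by
  by_contra hFx
  have hw : ∀ r : R, r ≠ 0 → ∃ s : R, r * s ≠ 0 ∧ (op (r * s) : Rᵐᵒᵖ) • F x = 0 := by
    intro r hr
    by_cases h0 : (op r : Rᵐᵒᵖ) • x ∈ N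
    · refine ⟨1, by simpa using hr, ?_⟩
      rw [mul_one, ← map_smul]
      exact hFN _ h0
    · have hx0 : (op r : Rᵐᵒᵖ) • x ≠ 0 := by
        intro h
        apply h0
        rw [h]
        exact N.zero_mem
      obtain ⟨a, haN, ha0⟩ := essIn_exists hNP (P.smul_mem _ hx) hx0
      have hsmul : a • ((op r : Rᵐᵒᵖ) • x) = (op (r * a.unop) : Rᵐᵒᵖ) • x := by
        rw [smul_smul]
        congr 1
      refine ⟨a.unop, ?_, ?_⟩
      · intro h
        apply ha0
        rw [hsmul, h, op_zero, zero_smul]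
      · have h1 : (op (r * a.unop) : Rᵐᵒᵖ) • x ∈ N := by rw [← hsmul]; exact haN
        calc (op (r * a.unop) : Rᵐᵒᵖ) • F x = F ((op (r * a.unop) : Rᵐᵒᵖ) • x) :=
              (map_smul F _ _).symm
        _ = 0 := hFN _ h1
  obtain ⟨a, ⟨v, hv⟩, ha0⟩ := hull_ess_exists hull hFx
  have hvne : v ≠ 0 := by
    intro h
    apply ha0
    rw [← hv, h, map_zero]
  apply hvne
  apply sing_zero hsimple
  intro r hr
  have hkey : ∀ t : R, i (v * t) = (op (a.unop * t) : Rᵐᵒᵖ) • F x := by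
    intro t
    have h1 : i (v * t) = (op t : Rᵐᵒᵖ) • i v := by
      rw [← map_smul]
      congr 1
    rw [h1, hv, smul_smul, op_mul, op_unop]
  by_cases ht : a.unop * r = 0
  · refine ⟨1, by simpa using hr, ?_⟩
    rw [mul_one]
    apply hull.inj
    rw [map_zero, hkey r, ht, op_zero, zero_smul]
  · obtain ⟨s, hs1, hs2⟩ := hw (a.unop * r) ht
    refine ⟨s, ?_, ?_⟩
    · intro h
      apply hs1
      rw [mul_assoc, h, mul_zero]
    · apply hull.inj
      rw [map_zero, hkey (r * s), ← mul_assoc, hs2]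

lemma hull_ext (hsimple : IsSimpleRing R) (hull : IsInjectiveHull i)
    {F G : Module.End Rᵐᵒᵖ C} (h : ∀ m, F (i m) = G (i m)) : F = G := by
  ext c
  have hFG : (F - G) c = 0 := by
    apply hull_kills hsimple hull (essSub_essIn hull.ess) _ Submodule.mem_top
    rintro y ⟨m, rfl⟩
    show F (i m) - G (i m) = 0
    rw [h m, sub_self]
  have h2 : F c - G c = 0 := by simpa using hFG
  exact sub_eq_zero.mp h2

lemma hull_eval_inj (hsimple : IsSimpleRing R) (hull : IsInjectiveHull i)
    {F G : Module.End Rᵐᵒᵖ C} (h : F (i 1) = G (i 1)) : F = G :=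
  hull_ext hsimple hull fun m => by
    rw [hi_op i m, map_smul, map_smul, h]

noncomputable def Lmap (hull : IsInjectiveHull i) (a : R) : Module.End Rᵐᵒᵖ C :=
  (hull.injE.out i hull.inj (i.comp (lmulOp a))).choose

lemma Lmap_apply (hull : IsInjectiveHull i) (a m : R) : Lmap hull a (i m) = i (a * m) :=
  (hull.injE.out i hull.inj (i.comp (lmulOp a))).choose_spec m

lemma Lmap_one (hsimple : IsSimpleRing R) (hull : IsInjectiveHull i) :
    Lmap hull 1 = 1 := by
  apply hull_eval_inj hsimple hull
  rw [Lmap_apply, one_mul, Module.End.one_apply]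

lemma Lmap_mul (hsimple : IsSimpleRing R) (hull : IsInjectiveHull i) (a b : R) :
    Lmap hull (a * b) = Lmap hull a * Lmap hull b := by
  apply hull_eval_inj hsimple hull
  rw [Lmap_apply, mul_one, Module.End.mul_apply, Lmap_apply, mul_one, Lmap_apply]

lemma Lmap_add (hsimple : IsSimpleRing R) (hull : IsInjectiveHull i) (a b : R) :
    Lmap hull (a + b) = Lmap hull a + Lmap hull b := by
  apply hull_eval_inj hsimple hull
  rw [Lmap_apply, LinearMap.add_apply, Lmap_apply, Lmap_apply, add_mul, map_add]

lemma Lmap_zero (hsimple : IsSimpleRing R) (hull : IsInjectiveHull i) :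
    Lmap hull 0 = 0 := by
  apply hull_eval_inj hsimple hull
  rw [Lmap_apply, zero_mul, map_zero, LinearMap.zero_apply]

end HullCtx
section TsetCtx

open MulOpposite

variable {R : Type u} [Ring R] {C : Type u} [AddCommGroup C] [Module Rᵐᵒᵖ C]

/-- The set of endomorphisms of the hull mapping `i 1` into `i(R)`, as a subring. -/
def Tset (i : R →ₗ[Rᵐᵒᵖ] C) : Subring (Module.End Rᵐᵒᵖ C) where
  carrier := {F | ∃ a : R, F (i 1) = i a}
  zero_mem' := ⟨0, by simp⟩
  one_mem' := ⟨1, by rw [Module.End.one_apply]⟩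
  add_mem' := by
    rintro F G ⟨a, ha⟩ ⟨b, hb⟩
    exact ⟨a + b, by rw [LinearMap.add_apply, ha, hb, map_add]⟩
  neg_mem' := by
    rintro F ⟨a, ha⟩
    exact ⟨-a, by rw [LinearMap.neg_apply, ha, map_neg]⟩
  mul_mem' := by
    rintro F G ⟨a, ha⟩ ⟨b, hb⟩
    refine ⟨a * b, ?_⟩
    rw [Module.End.mul_apply, hb, hi_op i b, map_smul, ha, ← map_smul]
    congr 1

variable {i : R →ₗ[Rᵐᵒᵖ] C}

lemma unit_mem (hainv : HullAutInv i) {F G : Module.End Rᵐᵒᵖ C}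
    (h1 : F * G = 1) (h2 : G * F = 1) : F ∈ Tset i := by
  have hc1 : F ∘ₗ G = LinearMap.id := by
    rw [← Module.End.mul_eq_comp, h1, Module.End.one_eq_id]
  have hc2 : G ∘ₗ F = LinearMap.id := by
    rw [← Module.End.mul_eq_comp, h2, Module.End.one_eq_id]
  obtain ⟨a, ha⟩ := hainv (LinearEquiv.ofLinear F G hc1 hc2) 1
  exact ⟨a, ha.symm⟩

lemma sq_mem (hainv : HullAutInv i) {x : Module.End Rᵐᵒᵖ C} (hx : x * x = 0) :
    x ∈ Tset i := by
  have h1 : (1 + x) * (1 - x) = 1 := by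
    have h : (1 + x) * (1 - x) = 1 - x * x := by noncomm_ring
    rw [h, hx, sub_zero]
  have h2 : (1 - x) * (1 + x) = 1 := by
    have h : (1 - x) * (1 + x) = 1 - x * x := by noncomm_ring
    rw [h, hx, sub_zero]
  have hu := unit_mem hainv h1 h2
  have hs := (Tset i).sub_mem hu (Tset i).one_mem
  simpa using hs

lemma one_mem_closure (hsimple : IsSimpleRing R) (hull : IsInjectiveHull i)
    {g : Module.End Rᵐᵒᵖ C} (hg : g ≠ 0) :
    (1 : Module.End Rᵐᵒᵖ C) ∈
      AddSubgroup.closure {x | ∃ P Q : Module.End Rᵐᵒᵖ C, x = P * g * Q} := by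
  haveI := hsimple
  have hc : g (i 1) ≠ 0 := by
    intro h
    apply hg
    apply hull_eval_inj hsimple hull (G := 0)
    simpa using h
  obtain ⟨a, ⟨b, hb⟩, ha0⟩ := hull_ess_exists hull hc
  have hbne : b ≠ 0 := by
    intro h
    apply ha0
    rw [← hb, h, map_zero]
  have hgb : Lmap hull b = g * Lmap hull a.unop := by
    apply hull_eval_inj hsimple hull
    rw [Lmap_apply, mul_one, hb, Module.End.mul_apply, Lmap_apply, mul_one, hi_op i a.unop,
      map_smul, op_unop]
  -- the two-sided ideal of `R` generated by `b`
  set gensR : Set R := {x | ∃ p q : R, x = p * b * q} with hgensR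
  set clR := AddSubgroup.closure gensR with hclR
  have hmull : ∀ {x y : R}, y ∈ (clR : Set R) → x * y ∈ (clR : Set R) := by
    intro x y hy
    have hle : clR ≤ AddSubgroup.comap (AddMonoidHom.mulLeft x) clR := by
      apply (AddSubgroup.closure_le _).mpr
      rintro z ⟨p, q, rfl⟩
      show x * (p * b * q) ∈ clR
      apply AddSubgroup.subset_closure
      exact ⟨x * p, q, by rw [← mul_assoc, ← mul_assoc]⟩
    exact hle hy
  have hmulr : ∀ {x y : R}, x ∈ (clR : Set R) → x * y ∈ (clR : Set R) := by
    intro x y hx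
    have hle : clR ≤ AddSubgroup.comap (AddMonoidHom.mulRight y) clR := by
      apply (AddSubgroup.closure_le _).mpr
      rintro z ⟨p, q, rfl⟩
      show p * b * q * y ∈ clR
      apply AddSubgroup.subset_closure
      exact ⟨p, q * y, by rw [← mul_assoc]⟩
    exact hle hx
  set J : TwoSidedIdeal R := TwoSidedIdeal.mk' (clR : Set R) clR.zero_mem
    (fun hx hy => clR.add_mem hx hy) (fun hx => clR.neg_mem hx) hmull hmulr with hJ
  have hmemJ : ∀ x : R, x ∈ J ↔ x ∈ (clR : Set R) := fun x =>
    TwoSidedIdeal.mem_mk' _ _ _ _ _ _ x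
  have hbJ : b ∈ J := (hmemJ b).mpr
    (AddSubgroup.subset_closure ⟨1, 1, by rw [one_mul, mul_one]⟩)
  have h1J : (1 : R) ∈ J := IsSimpleRing.one_mem_of_ne_zero_mem J hbne hbJ
  have h1cl : (1 : R) ∈ clR := (hmemJ 1).mp h1J
  -- transfer to `End C` via `Lmap`
  let LH : R →+ Module.End Rᵐᵒᵖ C :=
    { toFun := Lmap hull
      map_zero' := Lmap_zero hsimple hull
      map_add' := Lmap_add hsimple hull }
  have hle : clR ≤ AddSubgroup.comap LH
      (AddSubgroup.closure {x | ∃ P Q : Module.End Rᵐᵒᵖ C, x = P * g * Q}) := by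
    apply (AddSubgroup.closure_le _).mpr
    rintro z ⟨p, q, rfl⟩
    refine AddSubgroup.mem_comap.mpr (AddSubgroup.subset_closure ?_)
    refine ⟨Lmap hull p, Lmap hull a.unop * Lmap hull q, ?_⟩
    show Lmap hull (p * b * q) = _
    rw [Lmap_mul hsimple hull, Lmap_mul hsimple hull, hgb]
    noncomm_ring
  have hfin := hle h1cl
  have hL1 : LH 1 = 1 := Lmap_one hsimple hull
  rwa [AddSubgroup.mem_comap, hL1] at hfin

lemma corner_mem (hainv : HullAutInv i) {g h' F : Module.End Rᵐᵒᵖ C} (hgg : g * g = g)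
    (hgh : g * h' = 0) (hhg : h' * g = 0) (hhh : h' * h' = h')
    (hcl : (1 : Module.End Rᵐᵒᵖ C) ∈
      AddSubgroup.closure {x | ∃ P Q : Module.End Rᵐᵒᵖ C, x = P * h' * Q}) :
    g * F * g ∈ Tset i := by
  let φ : Module.End Rᵐᵒᵖ C →+ Module.End Rᵐᵒᵖ C :=
    (AddMonoidHom.mulLeft (g * F * g)).comp (AddMonoidHom.mulRight g)
  have hle : AddSubgroup.closure {x | ∃ P Q : Module.End Rᵐᵒᵖ C, x = P * h' * Q} ≤
      AddSubgroup.comap φ (Tset i).toAddSubgroup := by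
    apply (AddSubgroup.closure_le _).mpr
    rintro z ⟨P, Q, rfl⟩
    show g * F * g * (P * h' * Q * g) ∈ (Tset i).toAddSubgroup
    have ha : g * F * g * (P * (h' * h') * Q * g) = (g * F * g * P * h') * (h' * Q * g) := by
      noncomm_ring
    rw [hhh] at ha
    have h1 := ha
    have hz1 : (g * F * g * P * h') * (g * F * g * P * h') = 0 := by
      have h : (g * F * g * P * h') * (g * F * g * P * h')
          = g * F * g * P * ((h' * g) * (F * g * P * h')) := by noncomm_ring
      rw [h, hhg, zero_mul, mul_zero]
    have hz2 : (h' * Q * g) * (h' * Q * g) = 0 := by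
      have h : (h' * Q * g) * (h' * Q * g) = h' * Q * ((g * h') * (Q * g)) := by noncomm_ring
      rw [h, hgh, zero_mul, mul_zero]
    have hmem : (g * F * g * P * h') * (h' * Q * g) ∈ Tset i :=
      (Tset i).mul_mem (sq_mem hainv hz1) (sq_mem hainv hz2)
    simpa [h1] using hmem
  have hfin := hle hcl
  rw [AddSubgroup.mem_comap] at hfin
  have hφ : φ 1 = g * F * g := by
    show g * F * g * (1 * g) = g * F * g
    rw [one_mul, mul_assoc (g * F), hgg]
  rw [hφ] at hfin
  simpa using hfin

end TsetCtx
section Final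

open MulOpposite

variable {R : Type u} [Ring R] {C : Type u} [AddCommGroup C] [Module Rᵐᵒᵖ C]
variable {i : R →ₗ[Rᵐᵒᵖ] C}

lemma caseB (hsimple : IsSimpleRing R) (hull : IsInjectiveHull i) (hainv : HullAutInv i)
    {e : Module.End Rᵐᵒᵖ C} (he : e * e = e) (he0 : e ≠ 0) (he1 : e ≠ 1)
    (F : Module.End Rᵐᵒᵖ C) : F ∈ Tset i := by
  set f : Module.End Rᵐᵒᵖ C := 1 - e with hf
  have hff : f * f = f := by
    have h1 : f * f = 1 - e - e + e * e := by rw [hf]; noncomm_ring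
    rw [h1, he, hf]
    abel
  have hef : e * f = 0 := by rw [hf, mul_sub, mul_one, he, sub_self]
  have hfe : f * e = 0 := by rw [hf, sub_mul, one_mul, he, sub_self]
  have hf0 : f ≠ 0 := by
    intro h
    apply he1
    rw [hf] at h
    exact (sub_eq_zero.mp h).symm
  have hclE := one_mem_closure hsimple hull he0
  have hclF := one_mem_closure hsimple hull hf0
  have h1 : e * F * e ∈ Tset i := corner_mem hainv he hef hfe hff hclF
  have h2 : f * F * f ∈ Tset i := corner_mem hainv hff hfe hef he hclE
  have h3 : e * F * f ∈ Tset i := by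
    apply sq_mem hainv
    have h : (e * F * f) * (e * F * f) = e * F * ((f * e) * (F * f)) := by noncomm_ring
    rw [h, hfe, zero_mul, mul_zero]
  have h4 : f * F * e ∈ Tset i := by
    apply sq_mem hainv
    have h : (f * F * e) * (f * F * e) = f * F * ((e * f) * (F * e)) := by noncomm_ring
    rw [h, hef, zero_mul, mul_zero]
  have hsum : e * F * e + e * F * f + (f * F * e + f * F * f) = F := by
    rw [hf]; noncomm_ring
  have hmem := (Tset i).add_mem ((Tset i).add_mem h1 h3) ((Tset i).add_mem h4 h2)
  rwa [hsum] at hmem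

lemma caseA (hsimple : IsSimpleRing R) (hull : IsInjectiveHull i) (hainv : HullAutInv i)
    (htriv : ∀ p : Module.End Rᵐᵒᵖ C, p * p = p → p = 0 ∨ p = 1)
    (F : Module.End Rᵐᵒᵖ C) : F ∈ Tset i := by
  by_cases hF : F = 0
  · rw [hF]; exact (Tset i).zero_mem
  have hker : LinearMap.ker F = ⊥ := by
    have hclosed : ClosedSub (LinearMap.ker F) := by
      intro P hP
      refine le_antisymm hP.1 (fun x hx => ?_)
      exact LinearMap.mem_ker.mpr (hull_kills hsimple hull hP (fun y hy => hy) hx)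
    obtain ⟨π, hπ1, hπ2, hπ3⟩ := closed_summand hull.injE hclosed
    have hππ : π * π = π := LinearMap.ext hπ1
    rcases htriv π hππ with h | h
    · rw [← hπ2, h, LinearMap.range_zero]
    · exfalso
      apply hF
      ext c
      have hc : c ∈ LinearMap.range π := by rw [h]; exact ⟨c, rfl⟩
      rw [hπ2] at hc
      simpa using hc
  have hFinj : Function.Injective F := LinearMap.ker_eq_bot.mp hker
  obtain ⟨Ψ, hΨ⟩ := hull.injE.out (F : C →ₗ[Rᵐᵒᵖ] C) hFinj LinearMap.id
  have hΨF : Ψ * F = 1 := LinearMap.ext fun x => by simpa using hΨ x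
  have hρ : (F * Ψ) * (F * Ψ) = F * Ψ := by
    have h1 : (F * Ψ) * (F * Ψ) = F * ((Ψ * F) * Ψ) := by noncomm_ring
    rw [h1, hΨF, one_mul]
  rcases htriv (F * Ψ) hρ with h | h
  · exfalso
    apply hF
    ext x
    have h1 : F (Ψ (F x)) = 0 := by
      have h2 := congrFun (congrArg DFunLike.coe h) (F x)
      simpa [Module.End.mul_apply] using h2
    rw [hΨ x] at h1
    simpa using h1
  · exact unit_mem hainv h hΨF

lemma baer_of_hull (hsimple : IsSimpleRing R) (hull : IsInjectiveHull i)
    (hainv : HullAutInv i) : Module.Baer Rᵐᵒᵖ R := by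
  have hT : ∀ F : Module.End Rᵐᵒᵖ C, F ∈ Tset i := by
    by_cases hE : ∃ e : Module.End Rᵐᵒᵖ C, e * e = e ∧ e ≠ 0 ∧ e ≠ 1
    · obtain ⟨e, h1, h2, h3⟩ := hE
      exact caseB hsimple hull hainv h1 h2 h3
    · push_neg at hE
      refine caseA hsimple hull hainv (fun p hp => ?_)
      by_cases hp0 : p = 0
      · exact Or.inl hp0
      · exact Or.inr (hE p hp hp0)
  intro I gI
  let f : I →ₗ[Rᵐᵒᵖ] R :=
    { toFun := fun x => (x : Rᵐᵒᵖ).unop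
      map_add' := fun x y => rfl
      map_smul' := fun s x => by
        show ((s • (x : Rᵐᵒᵖ)) : Rᵐᵒᵖ).unop = s • (x : Rᵐᵒᵖ).unop
        rw [smul_eq_mul, unop_mul, MulOpposite.smul_eq_mul_unop] }
  have hf : Function.Injective f := by
    intro x y h
    exact Subtype.ext (MulOpposite.unop_injective h)
  obtain ⟨h, hh⟩ := hull.injE.out f hf (i.comp gI)
  obtain ⟨F, hF⟩ := hull.injE.out i hull.inj h
  obtain ⟨a, ha⟩ := hT F
  refine ⟨{ toFun := fun y => a * y.unop
            map_add' := fun x y => by show a * (x + y).unop = _; rw [unop_add, mul_add]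
            map_smul' := fun s y => by
              show a * (s • y).unop = s • (a * y.unop)
              rw [smul_eq_mul, unop_mul, MulOpposite.smul_eq_mul_unop, mul_assoc] }, ?_⟩
  intro x hx
  show a * (x : Rᵐᵒᵖ).unop = gI ⟨x, hx⟩
  have key : i (gI ⟨x, hx⟩) = i (a * (x : Rᵐᵒᵖ).unop) := by
    have e1 : i (gI ⟨x, hx⟩) = h (f ⟨x, hx⟩) := (hh ⟨x, hx⟩).symm
    have e2 : h (f ⟨x, hx⟩) = F (i (f ⟨x, hx⟩)) := (hF (f ⟨x, hx⟩)).symm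
    have e3 : F (i (f ⟨x, hx⟩)) = (op (f ⟨x, hx⟩) : Rᵐᵒᵖ) • F (i 1) := by
      rw [hi_op i (f ⟨x, hx⟩), map_smul]
    have e4 : (op (f ⟨x, hx⟩) : Rᵐᵒᵖ) • F (i 1) = i (a * f ⟨x, hx⟩) := by
      rw [ha, ← map_smul]
      congr 1
    exact e1.trans (e2.trans (e3.trans e4))
  exact (hull.inj key).symm

end Final
/-- a simple right automorphism-invariant ring is right self-injective. -/
theorem simple_autInvariant_selfInjective {R : Type u} [Ring R]
    (hsimple : IsSimpleRing R)
    (hinv : AutInvariant Rᵐᵒᵖ R) :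
    Module.Injective Rᵐᵒᵖ R := by
  classical
  haveI := hsimple
  -- embed `R` (as right module over itself) into an injective module
  let MM : ModuleCat.{u} Rᵐᵒᵖ := ModuleCat.of Rᵐᵒᵖ R
  let E0 : ModuleCat.{u} Rᵐᵒᵖ := CategoryTheory.Injective.under MM
  let jh : MM ⟶ E0 := CategoryTheory.Injective.ι MM
  have hjinj : Function.Injective jh := by
    rw [← ModuleCat.mono_iff_injective]
    infer_instance
  haveI : CategoryTheory.Injective (ModuleCat.of Rᵐᵒᵖ E0) :=
    CategoryTheory.Injective.injective_under MM
  have hE0 : Module.Injective Rᵐᵒᵖ E0 :=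
    Module.injective_module_of_injective_object Rᵐᵒᵖ E0
  obtain ⟨C', i, hull⟩ := exists_hull hE0 (jh.hom : R →ₗ[Rᵐᵒᵖ] E0) hjinj
  have hainv : HullAutInv i := hinv C' i hull
  exact (baer_of_hull hsimple hull hainv).injective
end

section
/- A simple ring R such that R_R is pseudo-injective is right self-injective. -/
universe u v w

namespace SPI

variable {S : Type u} [Ring S]

section General
variable {M : Type u} [AddCommGroup M] [Module S M]

/-- Elementwise essentiality of `N` in `M`. -/
def Ess (N : Submodule S M) : Prop := ∀ x : M, x ≠ 0 → ∃ s : S, s • x ∈ N ∧ s • x ≠ 0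

/-- `N` is essential in `P` (elementwise). -/
def EssP (N P : Submodule S M) : Prop :=
  ∀ x ∈ P, x ≠ 0 → ∃ s : S, s • x ∈ N ∧ s • x ≠ 0

lemma ess_mono {N N' : Submodule S M} (h : N ≤ N') (hN : Ess N) : Ess N' :=
  fun x hx => let ⟨s, h1, h2⟩ := hN x hx; ⟨s, h h1, h2⟩

lemma ess_top : Ess (⊤ : Submodule S M) :=
  fun x hx => ⟨1, trivial, by simpa using hx⟩

lemma ess_inf {N N' : Submodule S M} (hN : Ess N) (hN' : Ess N') : Ess (N ⊓ N') := by
  intro x hx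
  obtain ⟨s, h1, h2⟩ := hN x hx
  obtain ⟨t, h3, h4⟩ := hN' _ h2
  refine ⟨t * s, ?_, ?_⟩
  · rw [mul_smul]; exact ⟨N.smul_mem t h1, h3⟩
  · rw [mul_smul]; exact h4

lemma ess_comap {M' : Type u} [AddCommGroup M'] [Module S M'] (f : M' →ₗ[S] M)
    {N : Submodule S M} (hN : Ess N) : Ess (N.comap f) := by
  intro x hx
  by_cases h : f x = 0
  · exact ⟨1, by simpa [Submodule.mem_comap, h] using N.zero_mem, by simpa using hx⟩
  · obtain ⟨s, h1, h2⟩ := hN (f x) h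
    refine ⟨s, ?_, ?_⟩
    · simpa [Submodule.mem_comap, map_smul] using h1
    · intro h0
      exact h2 (by rw [← map_smul, h0, map_zero])

lemma ess_of_forall_inf {N : Submodule S M}
    (h : ∀ K : Submodule S M, K ⊓ N = ⊥ → K = ⊥) : Ess N := by
  intro x hx
  by_contra hc
  push_neg at hc
  have hspan : Submodule.span S {x} ⊓ N = ⊥ := by
    rw [eq_bot_iff]
    rintro y ⟨hy1, hy2⟩
    obtain ⟨a, rfl⟩ := Submodule.mem_span_singleton.1 hy1
    by_cases ha : a • x ∈ N
    · simpa using hc a ha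
    · exact absurd hy2 ha
  have := h _ hspan
  exact hx (by simpa [this] using Submodule.mem_span_singleton_self x (R := S))

lemma exists_complement (K : Submodule S M) :
    ∃ C : Submodule S M, C ⊓ K = ⊥ ∧ ∀ C', C ≤ C' → C' ⊓ K = ⊥ → C' = C := by
  have H : ∀ c ⊆ {C : Submodule S M | C ⊓ K = ⊥}, IsChain (· ≤ ·) c → ∀ y ∈ c,
      ∃ ub ∈ {C : Submodule S M | C ⊓ K = ⊥}, ∀ z ∈ c, z ≤ ub := by
    intro c hcs hchain y hy
    refine ⟨sSup c, ?_, fun z hz => le_sSup hz⟩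
    show sSup c ⊓ K = ⊥
    rw [eq_bot_iff]
    rintro x hx
    rw [Submodule.mem_inf] at hx
    obtain ⟨p, hp, hxp⟩ := (Submodule.mem_sSup_of_directed ⟨y, hy⟩ hchain.directedOn).1 hx.1
    have : x ∈ p ⊓ K := ⟨hxp, hx.2⟩
    rwa [hcs hp] at this
  obtain ⟨C, -, hmax⟩ := zorn_le_nonempty₀ _ H ⊥ (by simp)
  exact ⟨C, hmax.1, fun C' h1 h2 => le_antisymm (hmax.2 h2 h1) h1⟩

lemma exists_closure (N₀ : Submodule S M) :
    ∃ N : Submodule S M, N₀ ≤ N ∧ EssP N₀ N ∧ ∀ P, N ≤ P → EssP N P → P ≤ N := by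
  have H : ∀ c ⊆ {N : Submodule S M | N₀ ≤ N ∧ EssP N₀ N}, IsChain (· ≤ ·) c → ∀ y ∈ c,
      ∃ ub ∈ {N : Submodule S M | N₀ ≤ N ∧ EssP N₀ N}, ∀ z ∈ c, z ≤ ub := by
    intro c hcs hchain y hy
    refine ⟨sSup c, ⟨le_trans (hcs hy).1 (le_sSup hy), ?_⟩, fun z hz => le_sSup hz⟩
    intro x hx hx0
    obtain ⟨p, hp, hxp⟩ := (Submodule.mem_sSup_of_directed ⟨y, hy⟩ hchain.directedOn).1 hx
    exact (hcs hp).2 x hxp hx0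
  have hN₀mem : N₀ ≤ N₀ ∧ EssP N₀ N₀ :=
    ⟨le_rfl, fun x hx hx0 => ⟨1, by simpa using hx, by simpa using hx0⟩⟩
  obtain ⟨N, -, hmax⟩ := zorn_le_nonempty₀ _ H N₀ hN₀mem
  refine ⟨N, hmax.1.1, hmax.1.2, ?_⟩
  intro P hNP hP
  have hPmem : N₀ ≤ P ∧ EssP N₀ P := by
    refine ⟨le_trans hmax.1.1 hNP, ?_⟩
    intro x hxP hx0
    obtain ⟨s, h1, h2⟩ := hP x hxP hx0
    obtain ⟨t, h3, h4⟩ := hmax.1.2 _ h1 h2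
    exact ⟨t * s, by rw [mul_smul]; exact h3, by rw [mul_smul]; exact h4⟩
  exact hmax.2 hPmem hNP

lemma ess_map_quotient {K C : Submodule S M} (hCK : C ⊓ K = ⊥)
    (hmax : ∀ C', C ≤ C' → C' ⊓ K = ⊥ → C' = C) :
    Ess (K.map C.mkQ) := by
  apply ess_of_forall_inf
  intro S' hS'
  set T := S'.comap C.mkQ with hT
  have hCT : C ≤ T := by
    intro x hx
    have : C.mkQ x = 0 := (Submodule.Quotient.mk_eq_zero C).2 hx
    simp [hT, Submodule.mem_comap, this]
  have hTK : T ⊓ K = ⊥ := by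
    rw [eq_bot_iff]
    rintro x hx
    rw [Submodule.mem_inf] at hx
    have h2 : C.mkQ x ∈ K.map C.mkQ := ⟨x, hx.2, rfl⟩
    have h3 : C.mkQ x ∈ S' ⊓ K.map C.mkQ := ⟨hx.1, h2⟩
    rw [hS'] at h3
    have hxC : x ∈ C := (Submodule.Quotient.mk_eq_zero C).1 h3
    have : x ∈ C ⊓ K := ⟨hxC, hx.2⟩
    rwa [hCK] at this
  have hTC := hmax T hCT hTK
  rw [eq_bot_iff]
  intro y hy
  obtain ⟨x, rfl⟩ := C.mkQ_surjective y
  have hxT : x ∈ T := hy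
  rw [hTC] at hxT
  exact (Submodule.Quotient.mk_eq_zero C).2 hxT

lemma summand_of_closed [Module.Injective S M] (K : Submodule S M)
    (hc : ∀ P : Submodule S M, K ≤ P → EssP K P → P ≤ K) :
    ∃ g : M →ₗ[S] M, (∀ k ∈ K, g k = k) ∧ LinearMap.range g = K := by
  obtain ⟨C, hCK, hCmax⟩ := exists_complement K
  set p := C.mkQ with hp
  set f₀ : K →ₗ[S] (M ⧸ C) := p ∘ₗ K.subtype with hf₀def
  have hf₀ : Function.Injective f₀ := by
    rw [← LinearMap.ker_eq_bot, eq_bot_iff]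
    intro k hk
    have h1 : (k : M) ∈ C := (Submodule.Quotient.mk_eq_zero C).1 hk
    have h2 : (k : M) ∈ C ⊓ K := ⟨h1, k.2⟩
    rw [hCK] at h2
    exact (Submodule.mem_bot S).2 (Subtype.ext ((Submodule.mem_bot S).1 h2))
  have hrange : LinearMap.range f₀ = K.map p := by
    rw [hf₀def, LinearMap.range_comp, Submodule.range_subtype]
  have hVess : Ess (LinearMap.range f₀) := by
    rw [hrange]; exact ess_map_quotient hCK hCmax
  set e₁ := LinearEquiv.ofInjective f₀ hf₀ with he₁
  set α : (LinearMap.range f₀ : Submodule S (M ⧸ C)) →ₗ[S] M :=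
    K.subtype ∘ₗ (e₁.symm : LinearMap.range f₀ →ₗ[S] K) with hα
  obtain ⟨β, hβ⟩ := Module.Injective.out (LinearMap.range f₀).subtype
    (Submodule.injective_subtype _) α
  set g := β ∘ₗ p with hg
  have hαK : ∀ v, α v ∈ K := fun v => (e₁.symm v).2
  have hβv : ∀ (y : M ⧸ C) (hy : y ∈ LinearMap.range f₀), β y = α ⟨y, hy⟩ :=
    fun y hy => hβ ⟨y, hy⟩
  have hgk : ∀ k ∈ K, g k = k := by
    intro k hk
    have h1 : p k ∈ LinearMap.range f₀ := ⟨⟨k, hk⟩, rfl⟩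
    have h2 : g k = α ⟨p k, h1⟩ := hβv _ h1
    have h3 : (⟨p k, h1⟩ : LinearMap.range f₀) = e₁ ⟨k, hk⟩ := by
      apply Subtype.ext
      simp [he₁, hf₀def]
    rw [h2, h3, hα]
    simp
  have hβinj : Function.Injective β := by
    rw [← LinearMap.ker_eq_bot, eq_bot_iff]
    intro y hy
    by_contra hy0
    have hy0' : y ≠ 0 := fun h => hy0 (by simp [h])
    obtain ⟨s, hs1, hs2⟩ := hVess y hy0'
    have hβs : β (s • y) = 0 := by
      rw [map_smul, LinearMap.mem_ker.1 hy, smul_zero]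
    rw [hβv _ hs1] at hβs
    have : (⟨s • y, hs1⟩ : LinearMap.range f₀) = 0 := by
      apply (LinearEquiv.injective e₁.symm)
      apply Subtype.ext
      have : (e₁.symm ⟨s • y, hs1⟩ : M) = 0 := by
        simpa [hα] using hβs
      simpa [this]
    exact hs2 (by simpa using congrArg Subtype.val this)
  have hKle : K ≤ LinearMap.range β := by
    intro k hk
    exact ⟨p k, hgk k hk⟩
  have hEssP : EssP K (LinearMap.range β) := by
    rintro x ⟨w, rfl⟩ hx0
    have hw0 : w ≠ 0 := fun h => hx0 (by rw [h, map_zero])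
    obtain ⟨s, hs1, hs2⟩ := hVess w hw0
    refine ⟨s, ?_, ?_⟩
    · rw [← map_smul, hβv _ hs1]; exact hαK _
    · rw [← map_smul]
      intro h
      exact hs2 (hβinj (by rw [h, map_zero]))
  have hle : LinearMap.range β ≤ K := hc _ hKle hEssP
  refine ⟨g, hgk, ?_⟩
  have hrg : LinearMap.range g = LinearMap.range β := by
    rw [hg, LinearMap.range_comp, hp, Submodule.range_mkQ, Submodule.map_top]
  rw [hrg]
  exact le_antisymm hle hKle

lemma injective_of_closed [Module.Injective S M] (K : Submodule S M)
    (hc : ∀ P : Submodule S M, K ≤ P → EssP K P → P ≤ K) :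
    Module.Injective S K := by
  obtain ⟨g, hgk, hgr⟩ := summand_of_closed K hc
  constructor
  intro X Y _ _ _ _ f hf h
  obtain ⟨H, hH⟩ := Module.Injective.out f hf (K.subtype ∘ₗ h)
  refine ⟨LinearMap.codRestrict K (g ∘ₗ H)
    (fun y => hgr ▸ LinearMap.mem_range_self g (H y)), ?_⟩
  intro x
  apply Subtype.ext
  have h1 : H (f x) = (h x : M) := hH x
  simp only [LinearMap.codRestrict_apply, LinearMap.comp_apply, h1]
  exact hgk _ (h x).2

lemma injective_of_equiv {M' : Type u} [AddCommGroup M'] [Module S M']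
    (e : M ≃ₗ[S] M') [Module.Injective S M] : Module.Injective S M' := by
  constructor
  intro X Y _ _ _ _ f hf g
  obtain ⟨h, hh⟩ := Module.Injective.out f hf ((e.symm : M' →ₗ[S] M) ∘ₗ g)
  refine ⟨(e : M →ₗ[S] M') ∘ₗ h, fun x => ?_⟩
  have := hh x
  simp only [LinearMap.comp_apply] at this ⊢
  rw [this]
  simp

end General

section RingPart

variable {R : Type u} [Ring R]

/-- The right annihilator of an element of a right `R`-module (i.e. `Rᵐᵒᵖ`-module). -/
def annE' (R : Type u) [Ring R] {E : Type u} [AddCommGroup E] [Module Rᵐᵒᵖ E] (x : E) :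
    Submodule Rᵐᵒᵖ Rᵐᵒᵖ :=
  LinearMap.ker (LinearMap.toSpanSingleton Rᵐᵒᵖ E x)

lemma nonsingular_of_simple (hsimple : IsSimpleRing R) :
    ∀ r : R, Ess (annE' R r) → r = 0 := by
  have hsmul : ∀ (s : Rᵐᵒᵖ) (r : R), s • r = r * s.unop := fun s r => rfl
  set Z : TwoSidedIdeal R := TwoSidedIdeal.mk' {r : R | Ess (annE' R r)}
    (by
      show Ess (annE' R 0)
      have : annE' R (0 : R) = ⊤ := by
        rw [eq_top_iff]; intro s _; show s • (0 : R) = 0; exact smul_zero s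
      rw [this]; exact ess_top)
    (by
      intro x y hx hy
      refine ess_mono ?_ (ess_inf hx hy)
      rintro s ⟨h1, h2⟩
      have h1' : s • x = 0 := h1
      have h2' : s • y = 0 := h2
      show s • (x + y) = 0
      rw [smul_add, h1', h2', add_zero])
    (by
      intro x hx
      refine ess_mono ?_ hx
      intro s h1
      have h1' : s • x = 0 := h1
      show s • (-x) = 0
      rw [smul_neg, h1', neg_zero])
    (by
      -- y ∈ Z → x * y ∈ Z
      intro x y hy
      refine ess_mono ?_ hy
      intro s h1
      have h1' : y * s.unop = 0 := h1
      show s • (x * y) = 0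
      rw [hsmul, mul_assoc, h1', mul_zero])
    (by
      -- x ∈ Z → x * y ∈ Z
      intro x y hx
      have := ess_comap (LinearMap.toSpanSingleton Rᵐᵒᵖ Rᵐᵒᵖ (MulOpposite.op y)) hx
      refine ess_mono ?_ this
      intro s hs
      rw [Submodule.mem_comap] at hs
      have hs' : x * (y * s.unop) = 0 := hs
      show s • (x * y) = 0
      rw [hsmul, mul_assoc]
      exact hs') with hZ
  intro r hr
  have hrZ : r ∈ Z := by
    rw [hZ, TwoSidedIdeal.mem_mk']
    exact hr
  rcases hsimple.simple.eq_bot_or_eq_top Z with h | h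
  · rw [h, TwoSidedIdeal.mem_bot] at hrZ
    exact hrZ
  · exfalso
    have h1Z : (1 : R) ∈ Z := by rw [h]; trivial
    rw [hZ, TwoSidedIdeal.mem_mk'] at h1Z
    have h1Z' : Ess (annE' R (1 : R)) := h1Z
    have h1 : annE' R (1 : R) = ⊥ := by
      rw [eq_bot_iff]
      intro s hs
      have hs' : (1 : R) * s.unop = 0 := hs
      rw [one_mul] at hs'
      rw [Submodule.mem_bot]
      exact MulOpposite.unop_injective (by simpa using hs')
    rw [h1] at h1Z'
    obtain ⟨s, hs1, hs2⟩ := h1Z' (1 : Rᵐᵒᵖ) one_ne_zero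
    exact hs2 ((Submodule.mem_bot _).1 hs1)

end RingPart

section Core

variable {R : Type u} [Ring R] {E : Type u} [AddCommGroup E] [Module Rᵐᵒᵖ E]
variable (i : R →ₗ[Rᵐᵒᵖ] E)

open MulOpposite

lemma i_apply (r : R) : i r = op r • i 1 := by
  have h : (op r : Rᵐᵒᵖ) • (1 : R) = r := by
    show (1 : R) * r = r
    rw [one_mul]
  rw [← map_smul, h]

/-- Nonsingularity of an essential extension of a nonsingular module. -/
lemma ens (hi : Function.Injective i) (hess : Ess (LinearMap.range i))
    (hns : ∀ r : R, Ess (annE' R r) → r = 0) :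
    ∀ x : E, Ess (annE' R x) → x = 0 := by
  intro x hx
  by_contra hx0
  obtain ⟨s, hs1, hs2⟩ := hess x hx0
  obtain ⟨r, hr⟩ := hs1
  have hr0 : r ≠ 0 := by
    intro h; rw [h, map_zero] at hr; exact hs2 hr.symm
  apply hr0
  apply hns
  have h1 : Ess (annE' R (s • x)) := by
    refine ess_mono ?_ (ess_comap (LinearMap.toSpanSingleton Rᵐᵒᵖ Rᵐᵒᵖ s) hx)
    intro t ht
    rw [Submodule.mem_comap] at ht
    have ht' : (t * s) • x = 0 := ht
    show t • (s • x) = 0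
    rw [← mul_smul]
    exact ht'
  rw [← hr] at h1
  refine ess_mono ?_ h1
  intro t ht
  have ht' : t • i r = 0 := ht
  rw [← map_smul] at ht'
  show t • r = 0
  exact hi (by rw [ht', map_zero])

lemma ker_ess_zero (hEns : ∀ x : E, Ess (annE' R x) → x = 0)
    (h : E →ₗ[Rᵐᵒᵖ] E) (hk : Ess (LinearMap.ker h)) : h = 0 := by
  ext y
  show h y = 0
  apply hEns
  refine ess_mono ?_ (ess_comap (LinearMap.toSpanSingleton Rᵐᵒᵖ E y) hk)
  intro t ht
  rw [Submodule.mem_comap] at ht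
  have ht' : h (t • y) = 0 := ht
  show t • h y = 0
  rw [← map_smul]
  exact ht'

lemma eq_of_agree_on_range (hEns : ∀ x : E, Ess (annE' R x) → x = 0)
    (hess : Ess (LinearMap.range i)) {φ ψ : E →ₗ[Rᵐᵒᵖ] E}
    (hagree : ∀ r : R, φ (i r) = ψ (i r)) : φ = ψ := by
  have h0 : φ - ψ = 0 := by
    apply ker_ess_zero hEns
    refine ess_mono ?_ hess
    rintro x ⟨r, rfl⟩
    rw [LinearMap.mem_ker, LinearMap.sub_apply, hagree r, sub_self]
  rw [← sub_eq_zero]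
  exact h0

lemma ev_inj (hEns : ∀ x : E, Ess (annE' R x) → x = 0)
    (hess : Ess (LinearMap.range i)) {φ ψ : E →ₗ[Rᵐᵒᵖ] E}
    (h1 : φ (i 1) = ψ (i 1)) : φ = ψ := by
  apply eq_of_agree_on_range i hEns hess
  intro r
  rw [i_apply i r, map_smul, map_smul, h1]

lemma exists_rho [Module.Injective Rᵐᵒᵖ E] (hi : Function.Injective i) (x : E) :
    ∃ ρ : E →ₗ[Rᵐᵒᵖ] E, ∀ r : R, ρ (i r) = op r • x := by
  set d : R →ₗ[Rᵐᵒᵖ] E :=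
    { toFun := fun r => op r • x
      map_add' := by
        intro a b
        show op (a + b) • x = op a • x + op b • x
        rw [op_add, add_smul]
      map_smul' := by
        intro s r
        show op (s • r) • x = s • (op r • x)
        have h1 : s • r = r * s.unop := rfl
        rw [h1, op_mul, op_unop, mul_smul] } with hd
  obtain ⟨ρ, hρ⟩ := Module.Injective.out i hi d
  exact ⟨ρ, fun r => hρ r⟩

lemma exists_lml [Module.Injective Rᵐᵒᵖ E] (hi : Function.Injective i) (s : R) :
    ∃ ψ : E →ₗ[Rᵐᵒᵖ] E, ∀ r : R, ψ (i r) = i (s * r) := by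
  set d : R →ₗ[Rᵐᵒᵖ] R :=
    { toFun := fun r => s * r
      map_add' := mul_add s
      map_smul' := by
        intro c r
        show s * (c • r) = c • (s * r)
        have h1 : c • r = r * c.unop := rfl
        have h2 : c • (s * r) = s * r * c.unop := rfl
        rw [h1, h2, mul_assoc] } with hd
  obtain ⟨ψ, hψ⟩ := Module.Injective.out i hi (i ∘ₗ d)
  exact ⟨ψ, fun r => hψ r⟩

lemma autInv [Module.Injective Rᵐᵒᵖ E] (hi : Function.Injective i)
    (hess : Ess (LinearMap.range i)) (hEns : ∀ x : E, Ess (annE' R x) → x = 0)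
    (hp : PseudoInjective Rᵐᵒᵖ R) (σ : E ≃ₗ[Rᵐᵒᵖ] E) :
    σ (i 1) ∈ LinearMap.range i := by
  set A : Submodule Rᵐᵒᵖ R :=
    Submodule.comap ((σ : E →ₗ[Rᵐᵒᵖ] E) ∘ₗ i) (LinearMap.range i) with hA
  have hmem : ∀ a : A, ((σ : E →ₗ[Rᵐᵒᵖ] E) ∘ₗ i ∘ₗ A.subtype) a ∈ LinearMap.range i :=
    fun a => a.2
  set iE := LinearEquiv.ofInjective i hi with hiE
  set τ : A →ₗ[Rᵐᵒᵖ] R := (iE.symm : LinearMap.range i →ₗ[Rᵐᵒᵖ] R) ∘ₗ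
    (LinearMap.codRestrict (LinearMap.range i) ((σ : E →ₗ[Rᵐᵒᵖ] E) ∘ₗ i ∘ₗ A.subtype) hmem)
    with hτ
  have hiτ : ∀ a : A, i (τ a) = σ (i (a : R)) := by
    intro a
    have h1 : τ a = iE.symm ⟨σ (i (a : R)), a.2⟩ := rfl
    rw [h1]
    have h2 := LinearEquiv.ofInjective_symm_apply (f := i) (h := hi)
      ⟨σ (i (a : R)), a.2⟩
    exact h2
  have hτinj : Function.Injective τ := by
    intro a b hab
    have h1 : i (τ a) = i (τ b) := by rw [hab]
    rw [hiτ a, hiτ b] at h1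
    have h2 : i (a : R) = i (b : R) := σ.injective h1
    exact Subtype.ext (hi h2)
  obtain ⟨g, hg⟩ := hp A τ hτinj
  obtain ⟨G, hG⟩ := Module.Injective.out i hi (i ∘ₗ g)
  have key : (σ : E →ₗ[Rᵐᵒᵖ] E) = G := by
    have hker : Ess (LinearMap.ker ((σ : E →ₗ[Rᵐᵒᵖ] E) - G)) := by
      refine ess_mono ?_
        (ess_inf hess (ess_comap (σ : E →ₗ[Rᵐᵒᵖ] E) hess))
      rintro x ⟨⟨r, rfl⟩, hx2⟩
      have hx2' : σ (i r) ∈ LinearMap.range i := hx2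
      have hrA : r ∈ A := hx2'
      rw [LinearMap.mem_ker, LinearMap.sub_apply]
      have h1 : G (i r) = i (g r) := hG r
      have h2 : g r = τ ⟨r, hrA⟩ := hg ⟨r, hrA⟩
      rw [h1, h2, hiτ ⟨r, hrA⟩]
      show σ (i r) - σ (i r) = 0
      rw [sub_self]
    have h0 := ker_ess_zero hEns _ hker
    rw [← sub_eq_zero]
    exact h0
  have h1 : σ (i 1) = G (i 1) := by
    rw [← key]; rfl
  rw [h1, hG 1]
  exact ⟨g 1, rfl⟩

theorem core [Module.Injective Rᵐᵒᵖ E] (hi : Function.Injective i)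
    (hess : Ess (LinearMap.range i))
    (hns : ∀ r : R, Ess (annE' R r) → r = 0)
    (hp : PseudoInjective Rᵐᵒᵖ R) (hsimple : IsSimpleRing R) :
    LinearMap.range i = ⊤ := by
  have hEns := ens i hi hess hns
  choose rho hrho using exists_rho i hi
  choose lml hlml using exists_lml i hi
  have hrho1 : ∀ x : E, rho x (i 1) = x := by
    intro x
    rw [hrho x 1, op_one, one_smul]
  -- the "trace" condition: multiplication stability
  have hInT_mul : ∀ φ ψ : Module.End Rᵐᵒᵖ E, φ (i 1) ∈ LinearMap.range i →
      ψ (i 1) ∈ LinearMap.range i → (φ * ψ) (i 1) ∈ LinearMap.range i := by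
    intro φ ψ hφ hψ
    obtain ⟨t, ht⟩ := hψ
    have h1 : (φ * ψ) (i 1) = φ (i t) := by
      show φ (ψ (i 1)) = φ (i t)
      rw [ht]
    obtain ⟨u, hu⟩ := hφ
    rw [h1, i_apply i t, map_smul, ← hu, ← map_smul]
    exact ⟨op t • u, rfl⟩
  have hInT_unit : ∀ φ ψ : Module.End Rᵐᵒᵖ E, φ * ψ = 1 → ψ * φ = 1 →
      φ (i 1) ∈ LinearMap.range i := by
    intro φ ψ h1 h2
    have h1' : φ ∘ₗ ψ = LinearMap.id := by
      rw [← Module.End.mul_eq_comp, h1, Module.End.one_eq_id]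
    have h2' : ψ ∘ₗ φ = LinearMap.id := by
      rw [← Module.End.mul_eq_comp, h2, Module.End.one_eq_id]
    have := autInv i hi hess hEns hp (LinearEquiv.ofLinear φ ψ h1' h2')
    exact this
  have hInT_sq : ∀ n : Module.End Rᵐᵒᵖ E, n * n = 0 →
      n (i 1) ∈ LinearMap.range i := by
    intro n hn
    have h1 : (1 + n) * (1 - n) = 1 := by
      rw [mul_sub, mul_one, add_mul, one_mul, hn, add_zero]
      abel
    have h2 : (1 - n) * (1 + n) = 1 := by
      rw [sub_mul, one_mul, mul_add, mul_one, hn, add_zero]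
      abel
    have h3 := hInT_unit _ _ h1 h2
    have h4 : n (i 1) = (1 + n) (i 1) - i 1 := by
      show n (i 1) = (i 1 + n (i 1)) - i 1
      rw [add_sub_cancel_left]
    rw [h4]
    exact Submodule.sub_mem _ h3 ⟨1, rfl⟩
  -- key: the two-sided ideal generated by a nonzero endomorphism contains 1
  have keyG : ∀ e : Module.End Rᵐᵒᵖ E, e ≠ 0 →
      (1 : Module.End Rᵐᵒᵖ E) ∈ AddSubgroup.closure
        {q : Module.End Rᵐᵒᵖ E | ∃ a b : Module.End Rᵐᵒᵖ E, q = a * e * b} := by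
    intro e he0
    set G := AddSubgroup.closure
      {q : Module.End Rᵐᵒᵖ E | ∃ a b : Module.End Rᵐᵒᵖ E, q = a * e * b} with hGdef
    have stabL : ∀ (ψ : Module.End Rᵐᵒᵖ E), ∀ m ∈ G, ψ * m ∈ G := by
      intro ψ m hm
      induction hm using AddSubgroup.closure_induction with
      | mem w hw =>
        obtain ⟨a, b, rfl⟩ := hw
        refine AddSubgroup.subset_closure ⟨ψ * a, b, ?_⟩
        rw [← mul_assoc, ← mul_assoc]
      | zero =>
        rw [mul_zero]
        exact zero_mem G
      | add p q hp' hq' ihp ihq =>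
        rw [mul_add]
        exact add_mem ihp ihq
      | neg p hp' ihp =>
        rw [mul_neg]
        exact neg_mem ihp
    have stabR : ∀ (ψ : Module.End Rᵐᵒᵖ E), ∀ m ∈ G, m * ψ ∈ G := by
      intro ψ m hm
      induction hm using AddSubgroup.closure_induction with
      | mem w hw =>
        obtain ⟨a, b, rfl⟩ := hw
        refine AddSubgroup.subset_closure ⟨a, b * ψ, ?_⟩
        rw [mul_assoc, mul_assoc]
      | zero =>
        rw [zero_mul]
        exact zero_mem G
      | add p q hp' hq' ihp ihq =>
        rw [add_mul]
        exact add_mem ihp ihq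
      | neg p hp' ihp =>
        rw [neg_mul]
        exact neg_mem ihp
    set W : Submodule Rᵐᵒᵖ E :=
      { carrier := {x : E | ∃ φ ∈ G, φ (i 1) = x}
        add_mem' := by
          rintro a b ⟨φ, hφ, rfl⟩ ⟨φ', hφ', rfl⟩
          exact ⟨φ + φ', add_mem hφ hφ', rfl⟩
        zero_mem' := ⟨0, zero_mem G, rfl⟩
        smul_mem' := by
          rintro c x ⟨φ, hφ, rfl⟩
          refine ⟨φ * rho (i c.unop), stabR _ _ hφ, ?_⟩
          show φ (rho (i c.unop) (i 1)) = c • φ (i 1)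
          rw [hrho1]
          have hc : c • i 1 = i c.unop := by
            rw [← map_smul]
            congr 1
            show (1 : R) * c.unop = c.unop
            rw [one_mul]
          rw [← map_smul, hc] } with hWdef
    have heG : e ∈ G := AddSubgroup.subset_closure ⟨1, 1, by rw [one_mul, mul_one]⟩
    have hei : e (i 1) ≠ 0 := by
      intro h
      apply he0
      refine ev_inj i hEns hess (ψ := 0) ?_
      rw [h]
      rfl
    set crI : TwoSidedIdeal R := TwoSidedIdeal.mk' {r : R | i r ∈ W}
      (by show i 0 ∈ W; rw [map_zero]; exact W.zero_mem)
      (fun {x y} hx hy => by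
        show i (x + y) ∈ W
        rw [map_add]; exact W.add_mem hx hy)
      (fun {x} hx => by
        show i (-x) ∈ W
        rw [map_neg]; exact W.neg_mem hx)
      (fun {x y} hy => by
        obtain ⟨φ, hφ, hφ1⟩ := hy
        show i (x * y) ∈ W
        refine ⟨lml x * φ, stabL _ _ hφ, ?_⟩
        show lml x (φ (i 1)) = i (x * y)
        rw [hφ1, hlml x y])
      (fun {x y} hx => by
        show i (x * y) ∈ W
        have h1 : (op y : Rᵐᵒᵖ) • x = x * y := rfl
        rw [← h1, map_smul]
        exact W.smul_mem _ hx) with hcrIdef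
    have hcr : crI = ⊤ := by
      rcases hsimple.simple.eq_bot_or_eq_top crI with h | h
      · exfalso
        have heW : e (i 1) ∈ W := ⟨e, heG, rfl⟩
        obtain ⟨s, hs1, hs2⟩ := hess (e (i 1)) hei
        obtain ⟨r, hr⟩ := hs1
        have hrW : i r ∈ W := by rw [hr]; exact W.smul_mem s heW
        have hr0 : r ≠ 0 := by
          intro h0; rw [h0, map_zero] at hr; exact hs2 hr.symm
        have hrcr : r ∈ crI := by
          rw [hcrIdef, TwoSidedIdeal.mem_mk']
          exact hrW
        rw [h, TwoSidedIdeal.mem_bot] at hrcr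
        exact hr0 hrcr
      · exact h
    have h1W : i 1 ∈ W := by
      have h1cr : (1 : R) ∈ crI := by rw [hcr]; trivial
      rw [hcrIdef, TwoSidedIdeal.mem_mk'] at h1cr
      exact h1cr
    obtain ⟨φ, hφG, hφ1⟩ := h1W
    have hφeq : φ = 1 := by
      refine ev_inj i hEns hess ?_
      rw [hφ1]
      rfl
    rwa [hφeq] at hφG
  -- Peirce corner argument
  have corner : ∀ (q u v : Module.End Rᵐᵒᵖ E), u * v = 0 → v * u = 0 → v * v = v →
      v ≠ 0 → (u * q * u) (i 1) ∈ LinearMap.range i := by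
    intro q u v huv hvu hvv hv0
    have main : ∀ m ∈ AddSubgroup.closure
        {w : Module.End Rᵐᵒᵖ E | ∃ a b : Module.End Rᵐᵒᵖ E, w = a * v * b},
        (u * q * m * u) (i 1) ∈ LinearMap.range i := by
      intro m hm
      induction hm using AddSubgroup.closure_induction with
      | mem w hw =>
        obtain ⟨a, b, rfl⟩ := hw
        have h2 : (u * q * a * v) * (v * b * u) = u * q * (a * (v * v) * b) * u := by
          noncomm_ring
        rw [hvv] at h2
        rw [← h2]
        apply hInT_mul
        · apply hInT_sq
          have h3 : (u * q * a * v) * (u * q * a * v)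
              = u * q * a * (v * u) * q * a * v := by noncomm_ring
          rw [h3, hvu]
          simp only [mul_zero, zero_mul]
        · apply hInT_sq
          have h3 : (v * b * u) * (v * b * u) = v * b * (u * v) * b * u := by noncomm_ring
          rw [h3, huv]
          simp only [mul_zero, zero_mul]
      | zero =>
        rw [mul_zero, zero_mul]
        simp only [LinearMap.zero_apply]
        exact Submodule.zero_mem _
      | add p w hp' hw' ihp ihw =>
        have h3 : u * q * (p + w) * u = u * q * p * u + u * q * w * u := by noncomm_ring
        rw [h3, LinearMap.add_apply]
        exact Submodule.add_mem _ ihp ihw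
      | neg p hp' ihp =>
        have h3 : u * q * (-p) * u = -(u * q * p * u) := by noncomm_ring
        rw [h3, LinearMap.neg_apply]
        exact Submodule.neg_mem _ ihp
    have h2 := main 1 (keyG v hv0)
    rwa [mul_one] at h2
  -- main case split
  by_cases hdiv : ∀ π : Module.End Rᵐᵒᵖ E, π * π = π → π = 0 ∨ π = 1
  · -- no nontrivial idempotents: E is "uniform" and every nonzero endo is invertible
    rw [eq_top_iff]
    intro x _
    by_cases hx0 : x = 0
    · rw [hx0]; exact Submodule.zero_mem _
    have hρ1 : rho x (i 1) = x := hrho1 x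
    have hρ0 : rho x ≠ 0 := by
      intro h
      apply hx0
      rw [← hρ1, h]
      rfl
    have hcK : ∀ P : Submodule Rᵐᵒᵖ E, LinearMap.ker (rho x) ≤ P →
        EssP (LinearMap.ker (rho x)) P → P ≤ LinearMap.ker (rho x) := by
      intro P hKP hPE y hyP
      have hy0 : rho x y = 0 := by
        apply hEns
        intro t ht0
        by_cases h : t • y = 0
        · refine ⟨1, ?_, by simpa using ht0⟩
          show (1 * t) • (rho x y) = 0
          rw [one_mul, ← map_smul, h, map_zero]
        · obtain ⟨v, hv1, hv2⟩ := hPE (t • y) (P.smul_mem t hyP) h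
          refine ⟨v, ?_, ?_⟩
          · show (v * t) • rho x y = 0
            rw [← map_smul, mul_smul]
            exact hv1
          · intro h0
            have h0' : v * t = 0 := h0
            apply hv2
            rw [← mul_smul, h0', zero_smul]
      exact hy0
    obtain ⟨g, hgk, hgr⟩ := summand_of_closed (LinearMap.ker (rho x)) hcK
    have hgidem : g * g = g := by
      ext y
      show g (g y) = g y
      exact hgk _ (hgr ▸ LinearMap.mem_range_self g y)
    have hρinj : Function.Injective (rho x) := by
      rcases hdiv g hgidem with h | h
      · rw [← LinearMap.ker_eq_bot, ← hgr, h]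
        exact LinearMap.range_zero
      · exfalso
        apply hρ0
        ext y
        show rho x y = 0
        have hy : y ∈ LinearMap.range g := by
          rw [h]
          exact ⟨y, rfl⟩
        rw [hgr] at hy
        exact hy
    set V := LinearMap.range (rho x) with hV
    haveI : Module.Injective Rᵐᵒᵖ V :=
      injective_of_equiv (LinearEquiv.ofInjective (rho x) hρinj)
    obtain ⟨rr, hrr⟩ := Module.Injective.out V.subtype (Submodule.injective_subtype V)
      (LinearMap.id : V →ₗ[Rᵐᵒᵖ] V)
    set π : Module.End Rᵐᵒᵖ E := V.subtype ∘ₗ rr with hπdef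
    have hπfix : ∀ v : V, π (v : E) = (v : E) := by
      intro v
      show (V.subtype (rr (V.subtype v)) : E) = (v : E)
      rw [hrr v]
      rfl
    have hπidem : π * π = π := by
      ext y
      show π (π y) = π y
      have h1 : π y = ((rr y : V) : E) := rfl
      rw [h1]
      exact hπfix (rr y)
    have hπ1 : π = 1 := by
      rcases hdiv π hπidem with h | h
      · exfalso
        obtain ⟨y, hy⟩ : ∃ y, rho x y ≠ 0 := by
          by_contra hno
          push_neg at hno
          apply hρ0
          ext z
          exact hno z
        have h1 : π (rho x y) = rho x y := hπfix ⟨rho x y, LinearMap.mem_range_self _ y⟩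
        rw [h] at h1
        exact hy (by rw [← h1]; rfl)
      · exact h
    have hρsurj : Function.Surjective (rho x) := by
      intro z
      have h1 : π z = z := by rw [hπ1]; rfl
      have hz : z ∈ V := by
        rw [← h1]
        exact ((rr z : V)).2
      exact hz
    have := autInv i hi hess hEns hp (LinearEquiv.ofBijective (rho x) ⟨hρinj, hρsurj⟩)
    have hσ1 : (LinearEquiv.ofBijective (rho x) ⟨hρinj, hρsurj⟩) (i 1) = x := hρ1
    rwa [hσ1] at this
  · push_neg at hdiv
    obtain ⟨e, hee, he0, he1⟩ := hdiv
    have hq : ∀ q : Module.End Rᵐᵒᵖ E, q (i 1) ∈ LinearMap.range i := by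
      intro q
      have he'0 : (1 : Module.End Rᵐᵒᵖ E) - e ≠ 0 := by
        intro h
        rw [sub_eq_zero] at h
        exact he1 h.symm
      have hmul1 : e * (1 - e) = 0 := by rw [mul_sub, mul_one, hee, sub_self]
      have hmul2 : (1 - e) * e = 0 := by rw [sub_mul, one_mul, hee, sub_self]
      have hmul3 : (1 - e) * (1 - e) = (1 - e) := by
        rw [mul_sub, mul_one, sub_mul, one_mul, hee, sub_self, sub_zero]
      have c1 : (e * q * e) (i 1) ∈ LinearMap.range i :=
        corner q e (1 - e) hmul1 hmul2 hmul3 he'0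
      have c4 : ((1 - e) * q * (1 - e)) (i 1) ∈ LinearMap.range i :=
        corner q (1 - e) e hmul2 hmul1 hee he0
      have c2 : (e * q * (1 - e)) (i 1) ∈ LinearMap.range i := by
        apply hInT_sq
        have h3 : (e * q * (1 - e)) * (e * q * (1 - e))
            = e * q * ((1 - e) * e) * q * (1 - e) := by noncomm_ring
        rw [h3, hmul2]
        simp only [mul_zero, zero_mul]
      have c3 : ((1 - e) * q * e) (i 1) ∈ LinearMap.range i := by
        apply hInT_sq
        have h3 : ((1 - e) * q * e) * ((1 - e) * q * e)
            = (1 - e) * q * (e * (1 - e)) * q * e := by noncomm_ring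
        rw [h3, hmul1]
        simp only [mul_zero, zero_mul]
      have hdecomp : q = e * q * e + e * q * (1 - e) + (1 - e) * q * e
          + (1 - e) * q * (1 - e) := by noncomm_ring
      rw [hdecomp]
      simp only [LinearMap.add_apply]
      exact Submodule.add_mem _ (Submodule.add_mem _ (Submodule.add_mem _ c1 c2) c3) c4
    rw [eq_top_iff]
    intro x _
    have := hq (rho x)
    rwa [hrho1 x] at this

end Core

end SPI

/-- a simple right pseudo-injective ring is right self-injective. -/
theorem simple_pseudoInjective_selfInjective {R : Type u} [Ring R]
    (hsimple : IsSimpleRing R)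
    (hp : PseudoInjective Rᵐᵒᵖ R) :
    Module.Injective Rᵐᵒᵖ R := by
  classical
  have hns := SPI.nonsingular_of_simple hsimple
  letI : CategoryTheory.EnoughInjectives (ModuleCat.{u} Rᵐᵒᵖ) :=
    ModuleCat.enoughInjectives.{u, u} Rᵐᵒᵖ
  set M0 : ModuleCat.{u} Rᵐᵒᵖ := ModuleCat.of Rᵐᵒᵖ R with hM0
  set I : ModuleCat.{u} Rᵐᵒᵖ := CategoryTheory.Injective.under M0 with hIdef
  haveI hobj : CategoryTheory.Injective (ModuleCat.of Rᵐᵒᵖ ↥I) :=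
    CategoryTheory.Injective.injective_under M0
  haveI hIinj : Module.Injective Rᵐᵒᵖ ↥I :=
    Module.injective_module_of_injective_object Rᵐᵒᵖ ↥I
  set i₀ : R →ₗ[Rᵐᵒᵖ] ↥I := (CategoryTheory.Injective.ι M0).hom with hi₀def
  have hi₀ : Function.Injective i₀ :=
    (ModuleCat.mono_iff_injective (CategoryTheory.Injective.ι M0)).1 inferInstance
  obtain ⟨N, hNle, hNess, hNmax⟩ := SPI.exists_closure (LinearMap.range i₀)
  haveI : Module.Injective Rᵐᵒᵖ ↥N := SPI.injective_of_closed N hNmax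
  set i' : R →ₗ[Rᵐᵒᵖ] ↥N := LinearMap.codRestrict N i₀ (fun r => hNle ⟨r, rfl⟩) with hi'def
  have hi' : Function.Injective i' := by
    intro a b hab
    apply hi₀
    exact congrArg Subtype.val hab
  have hess' : SPI.Ess (LinearMap.range i') := by
    intro x hx0
    have hxN : (x : ↥I) ∈ N := x.2
    have hx0' : (x : ↥I) ≠ 0 := fun h => hx0 (Subtype.ext h)
    obtain ⟨s, hs1, hs2⟩ := hNess (x : ↥I) hxN hx0'
    obtain ⟨r, hr⟩ := hs1
    refine ⟨s, ⟨r, ?_⟩, ?_⟩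
    · apply Subtype.ext
      exact hr
    · intro h
      apply hs2
      have h2 := congrArg Subtype.val h
      simpa using h2
  have hcore := SPI.core i' hi' hess' hns hp hsimple
  have hbij : Function.Bijective i' := ⟨hi', by rw [← LinearMap.range_eq_top]; exact hcore⟩
  exact SPI.injective_of_equiv (LinearEquiv.ofBijective i' hbij).symm
end

section
/- Let R be the subring of the product ∏_{n∈ℕ} ℤ/2ℤ consisting of sequences that are eventually constant. Then R_R is automorphism-invariant but R is not self-injective. -/
universe u v w

open Filter in
/-- The subring of `∏_{n ∈ ℕ} ℤ/2ℤ` consisting of eventually constant sequences. -/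
def EvConst : Subring (ℕ → ZMod 2) where
  carrier := {x | ∃ a : ZMod 2, ∀ᶠ n in atTop, x n = a}
  zero_mem' := ⟨0, Eventually.of_forall fun _ => rfl⟩
  one_mem' := ⟨1, Eventually.of_forall fun _ => rfl⟩
  add_mem' := by
    rintro x y ⟨a, ha⟩ ⟨b, hb⟩
    exact ⟨a + b, (ha.and hb).mono fun n ⟨h1, h2⟩ => by simp [Pi.add_apply, h1, h2]⟩
  neg_mem' := by
    rintro x ⟨a, ha⟩
    exact ⟨-a, ha.mono fun n h => by simp [Pi.neg_apply, h]⟩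
  mul_mem' := by
    rintro x y ⟨a, ha⟩ ⟨b, hb⟩
    exact ⟨a * b, (ha.and hb).mono fun n ⟨h1, h2⟩ => by simp [Pi.mul_apply, h1, h2]⟩

namespace EvConstAux

abbrev S2 : Type := ℕ → ZMod 2

lemma zmod2_eq_one : ∀ {c : ZMod 2}, c ≠ 0 → c = 1 := by decide

def idem (n : ℕ) : EvConst :=
  ⟨Pi.single n 1, 0, Filter.eventually_atTop.mpr
    ⟨n + 1, fun m hm => Pi.single_eq_of_ne (by omega) 1⟩⟩

lemma idem_coe (n : ℕ) : ((idem n : EvConst) : S2) = Pi.single n 1 := rfl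

lemma smul_apply' (r : EvConst) (x : S2) (n : ℕ) : (r • x) n = (r : S2) n * x n := rfl

lemma idem_smul (n : ℕ) (x : S2) : idem n • x = (Pi.single n (x n) : S2) := by
  funext m
  rw [smul_apply', idem_coe]
  rcases eq_or_ne m n with h | h
  · subst h; simp
  · simp [Pi.single_eq_of_ne h]

def iota : EvConst →ₗ[EvConst] S2 where
  toFun := Subtype.val
  map_add' _ _ := rfl
  map_smul' _ _ := rfl

lemma iota_inj : Function.Injective iota := fun _ _ h => Subtype.ext h

lemma essential_range_iota : EssentialSub (LinearMap.range iota) := by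
  intro K hK
  rw [Submodule.eq_bot_iff]
  intro x hx
  by_contra hne
  obtain ⟨n, hn⟩ := Function.ne_iff.mp hne
  have hxn : x n = 1 := zmod2_eq_one hn
  have hmem : idem n • x ∈ K ⊓ LinearMap.range iota :=
    ⟨K.smul_mem _ hx, ⟨idem n, by rw [idem_smul, hxn]; rfl⟩⟩
  rw [hK, Submodule.mem_bot] at hmem
  have h2 : (Pi.single n (x n) : S2) = 0 := by rw [← idem_smul]; exact hmem
  have h3 := congrFun h2 n
  rw [Pi.single_eq_same, hxn] at h3
  exact one_ne_zero h3

set_option synthInstance.maxHeartbeats 1000000 in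
set_option maxHeartbeats 1000000 in
lemma baer_S2 : Module.Baer EvConst S2 := by
  classical
  intro I f
  refine ⟨⟨⟨fun r n =>
      if h : idem n ∈ I then f ⟨idem n * r, I.mul_mem_right r h⟩ n else 0, ?_⟩, ?_⟩, ?_⟩
  · intro r r'
    funext n
    by_cases h : idem n ∈ I
    · simp only [Pi.add_apply, dif_pos h]
      have key : (⟨idem n * (r + r'), I.mul_mem_right _ h⟩ : I)
          = ⟨idem n * r, I.mul_mem_right _ h⟩ + ⟨idem n * r', I.mul_mem_right _ h⟩ :=
        Subtype.ext (mul_add _ _ _)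
      rw [key, map_add]
      rfl
    · simp only [Pi.add_apply, dif_neg h, add_zero]
  · intro c r
    funext n
    dsimp only [RingHom.id_apply]
    rw [smul_apply']
    by_cases h : idem n ∈ I
    · simp only [dif_pos h]
      have key : (⟨idem n * (c • r), I.mul_mem_right _ h⟩ : I)
          = (c • (⟨idem n * r, I.mul_mem_right _ h⟩ : I) : I) := by
        apply Subtype.ext
        show idem n * (c * r) = c * (idem n * r)
        ring
      rw [key, map_smul, smul_apply']
    · simp only [dif_neg h, mul_zero]
  · intro x hx
    funext n
    show (if h : idem n ∈ I then f ⟨idem n * x, I.mul_mem_right x h⟩ n else 0) = f ⟨x, hx⟩ n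
    by_cases h : idem n ∈ I
    · rw [dif_pos h]
      have key : (⟨idem n * x, I.mul_mem_right _ h⟩ : I)
          = (idem n • (⟨x, hx⟩ : I) : I) := rfl
      rw [key, map_smul, smul_apply', idem_coe, Pi.single_eq_same, one_mul]
    · rw [dif_neg h]
      have hxn : (x : S2) n = 0 := by
        by_contra hne
        apply h
        have heq : idem n = idem n * x := by
          apply Subtype.ext
          funext m
          show (Pi.single n 1 : S2) m = (Pi.single n 1 : S2) m * (x : S2) m
          rcases eq_or_ne m n with hm | hm
          · subst hm; rw [Pi.single_eq_same, zmod2_eq_one hne, mul_one]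
          · rw [Pi.single_eq_of_ne hm, zero_mul]
        rw [heq]
        exact I.mul_mem_left _ hx
      have hz : (idem n • (⟨x, hx⟩ : I) : I) = 0 := by
        apply Subtype.ext
        show idem n * x = (0 : EvConst)
        apply Subtype.ext
        funext m
        show (Pi.single n 1 : S2) m * (x : S2) m = 0
        rcases eq_or_ne m n with hm | hm
        · subst hm; rw [hxn, mul_zero]
        · rw [Pi.single_eq_of_ne hm, zero_mul]
      have hkey : f ⟨x, hx⟩ n = (idem n • f ⟨x, hx⟩) n := by
        rw [smul_apply', idem_coe, Pi.single_eq_same, one_mul]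
      rw [hkey, ← map_smul, hz, map_zero]
      rfl

lemma hom_inj_id (h : S2 →ₗ[EvConst] S2) (hinj : Function.Injective h) : ∀ x, h x = x := by
  have hfix : ∀ n, h (Pi.single n 1) = Pi.single n 1 := by
    intro n
    have key : h (Pi.single n 1) = (Pi.single n (h (Pi.single n 1) n) : S2) := by
      conv_lhs => rw [show (Pi.single n 1 : S2) = idem n • Pi.single n 1 by
        rw [idem_smul, Pi.single_eq_same], map_smul, idem_smul]
    have hne : h (Pi.single n 1) n ≠ 0 := by
      intro h0
      have h1 : h (Pi.single n 1) = h 0 := by rw [key, h0, Pi.single_zero, map_zero]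
      have h2 := congrFun (hinj h1) n
      rw [Pi.single_eq_same] at h2
      exact one_ne_zero h2
    rw [key, zmod2_eq_one hne]
  intro x
  funext n
  have key : h x n = h (idem n • x) n := by
    rw [map_smul, smul_apply', idem_coe, Pi.single_eq_same, one_mul]
  rcases eq_or_ne (x n) 0 with hx | hx
  · rw [key, idem_smul, hx, Pi.single_zero, map_zero]
    rfl
  · have hx1 := zmod2_eq_one hx
    rw [key, idem_smul, hx1, hfix, Pi.single_eq_same]

end EvConstAux

set_option maxHeartbeats 1000000

/-- the ring of eventually constant `ℤ/2ℤ`-sequences is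
automorphism-invariant over itself but not self-injective. -/
theorem evConst_autInvariant_not_selfInjective :
    AutInvariant EvConst EvConst ∧ ¬ Module.Injective EvConst EvConst := by
  classical
  constructor
  · intro E _ _ i hull g m
    obtain ⟨φ, hφ⟩ := hull.injE.out EvConstAux.iota EvConstAux.iota_inj i
    have hφinj : Function.Injective φ := by
      rw [← LinearMap.ker_eq_bot]
      apply EvConstAux.essential_range_iota
      rw [Submodule.eq_bot_iff]
      rintro x ⟨hk, r, rfl⟩
      have h0 : i r = 0 := by rw [← hφ]; exact hk
      have hr : r = 0 := hull.inj (by rw [h0, map_zero])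
      rw [hr, map_zero]
    have hSinj : Module.Injective EvConst EvConstAux.S2 := EvConstAux.baer_S2.injective
    obtain ⟨π, hπ⟩ := hSinj.out φ hφinj LinearMap.id
    have hπinj : Function.Injective π := by
      rw [← LinearMap.ker_eq_bot]
      apply hull.ess
      rw [Submodule.eq_bot_iff]
      rintro y ⟨hk, m', rfl⟩
      have hk0 : π (i m') = 0 := hk
      have h1 : EvConstAux.iota m' = 0 := by
        have h2 : π (i m') = EvConstAux.iota m' := by rw [← hφ m']; exact hπ _
        rw [← h2, hk0]
      have hm' : m' = 0 := EvConstAux.iota_inj (by rw [h1, map_zero])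
      rw [hm', map_zero]
    set h : EvConstAux.S2 →ₗ[EvConst] EvConstAux.S2 := π ∘ₗ (g.toLinearMap ∘ₗ φ) with hh
    have hinj : Function.Injective h := by
      intro a b hab
      exact hφinj (g.injective (hπinj hab))
    refine ⟨m, ?_⟩
    rw [← hφ m]
    apply hπinj
    have h1 : π (g (φ (EvConstAux.iota m))) = EvConstAux.iota m :=
      EvConstAux.hom_inj_id h hinj (EvConstAux.iota m)
    have h2 : π (φ (EvConstAux.iota m)) = EvConstAux.iota m := hπ _
    rw [h2, h1]
  · intro hInj
    obtain ⟨π, hπ⟩ := hInj.out EvConstAux.iota EvConstAux.iota_inj LinearMap.id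
    set x : EvConstAux.S2 := fun n => if Even n then 0 else 1 with hx
    have hcoord : ∀ n, ((π x : EvConst) : EvConstAux.S2) n = x n := by
      intro n
      have key : EvConstAux.idem n • π x = π (EvConstAux.idem n • x) := (map_smul π _ x).symm
      have hval : ((EvConstAux.idem n • π x : EvConst) : EvConstAux.S2) n
          = ((π x : EvConst) : EvConstAux.S2) n := by
        rw [smul_eq_mul, Subring.coe_mul, Pi.mul_apply, EvConstAux.idem_coe,
          Pi.single_eq_same, one_mul]
      rcases eq_or_ne (x n) 0 with h0 | h0
      · have hz : EvConstAux.idem n • x = 0 := by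
          rw [EvConstAux.idem_smul, h0, Pi.single_zero]
        rw [← hval, key, hz, map_zero, h0]
        rfl
      · have h1 := EvConstAux.zmod2_eq_one h0
        have hz : EvConstAux.idem n • x = EvConstAux.iota (EvConstAux.idem n) := by
          rw [EvConstAux.idem_smul, h1]; rfl
        rw [← hval, key, hz, hπ, h1, LinearMap.id_apply, EvConstAux.idem_coe]
        exact Pi.single_eq_same n 1
    obtain ⟨a, ha⟩ := (π x).2
    obtain ⟨N, hN⟩ := Filter.eventually_atTop.mp ha
    have hev : x (2 * N) = a := by rw [← hcoord]; exact hN (2 * N) (by omega)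
    have hodd : x (2 * N + 1) = a := by rw [← hcoord]; exact hN (2 * N + 1) (by omega)
    simp only [hx] at hev hodd
    rw [if_pos (even_two_mul N)] at hev
    rw [if_neg (fun hc => (Nat.even_add_one.mp hc) (even_two_mul N))] at hodd
    rw [← hev] at hodd
    exact one_ne_zero hodd
end

section
/- Let M = A ⊕ B with A and B orthogonal modules, C a submodule of M, and f : C → M a monomorphism. Then f(C ∩ B) ∩ B is an essential submodule of f(C ∩ B). -/
universe u v w

/-- for `M = A ⊕ B` with `A`, `B` orthogonal, `C ≤ M` and a monomorphism
`f : C → M`, `f(C ∩ B) ∩ B` is essential in `f(C ∩ B)`. -/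
theorem image_inter_essential {R : Type u} [Ring R]
    {M : Type v} [AddCommGroup M] [Module R M]
    (A B : Submodule R M) (hcompl : IsCompl A B)
    (horth : OrthogonalMod R ↥A ↥B)
    (C : Submodule R M) (f : ↥C →ₗ[R] M) (hf : Function.Injective f) :
    EssentialIn (Submodule.map f ((C ⊓ B).comap C.subtype) ⊓ B)
      (Submodule.map f ((C ⊓ B).comap C.subtype)) := by
  constructor
  · exact inf_le_left
  · intro K hKP hK0
    set S : Submodule R ↥C := (C ⊓ B).comap C.subtype with hS
    set P : Submodule R M := Submodule.map f S with hP
    -- projection onto A with kernel B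
    set π : M →ₗ[R] ↥A := Submodule.linearProjOfIsCompl A B hcompl with hπ
    -- K embeds into A via π
    have hπinj : Function.Injective (π.comp K.subtype) := by
      rw [← LinearMap.ker_eq_bot, LinearMap.ker_eq_bot']
      intro ⟨x, hx⟩ hx0
      have hxB : x ∈ B := by
        have := congrArg (Subtype.val) hx0
        simpa [hπ, Submodule.linearProjOfIsCompl_apply_eq_zero_iff] using
          (Submodule.linearProjOfIsCompl_apply_eq_zero_iff hcompl).mp hx0
      have : x ∈ K ⊓ (P ⊓ B) := ⟨hx, hKP hx, hxB⟩
      rw [hK0] at this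
      exact Subtype.ext this
    -- T is the preimage of K inside S
    set T : Submodule R ↥C := S ⊓ K.comap f with hT
    -- T ≃ K via f
    have hmemK : ∀ t : ↥T, f (T.subtype t) ∈ K := fun t => t.2.2
    set φ : ↥T →ₗ[R] ↥K := LinearMap.codRestrict K (f.comp T.subtype) hmemK with hφ
    have hφbij : Function.Bijective φ := by
      constructor
      · intro a b hab
        have : f (T.subtype a) = f (T.subtype b) := congrArg Subtype.val hab
        exact Subtype.ext (hf this)
      · rintro ⟨k, hk⟩
        obtain ⟨c, hcS, hfc⟩ := hKP hk
        refine ⟨⟨c, hcS, by simpa [Submodule.mem_comap, hfc] using hk⟩, ?_⟩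
        exact Subtype.ext (by simpa [hφ] using hfc)
    -- T embeds into B
    have hmemB : ∀ t : ↥T, C.subtype (T.subtype t) ∈ B := fun t => t.2.1.2
    set ψ : ↥T →ₗ[R] ↥B := LinearMap.codRestrict B (C.subtype.comp T.subtype) hmemB with hψ
    have hψinj : Function.Injective ψ := by
      intro a b hab
      have h1 := congrArg Subtype.val hab
      exact Subtype.ext (Subtype.ext h1)
    -- assemble isomorphism between submodule of A and submodule of B
    set A' : Submodule R ↥A := LinearMap.range (π.comp K.subtype) with hA'
    set B' : Submodule R ↥B := LinearMap.range ψ with hB'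
    have e1 : ↥K ≃ₗ[R] A' := LinearEquiv.ofInjective _ hπinj
    have e2 : ↥T ≃ₗ[R] ↥K := LinearEquiv.ofBijective φ hφbij
    have e3 : ↥T ≃ₗ[R] B' := LinearEquiv.ofInjective _ hψinj
    have hA'bot : A' = ⊥ := horth A' B' ⟨(e1.symm.trans e2.symm).trans e3⟩
    -- hence K ≤ B
    have hKB : K ≤ B := by
      intro x hx
      have : π.comp K.subtype ⟨x, hx⟩ ∈ A' := LinearMap.mem_range_self _ _
      rw [hA'bot, Submodule.mem_bot] at this
      exact (Submodule.linearProjOfIsCompl_apply_eq_zero_iff hcompl).mp this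
    -- conclude
    rw [eq_bot_iff]
    intro x hx
    have : x ∈ K ⊓ (P ⊓ B) := ⟨hx, hKP hx, hKB hx⟩
    rwa [hK0] at this
end
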